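/- arXiv:1405.0989 — 6 statements merged into one kernel-verified Lean document; each statement's English description precedes it below -/
import Mathlib

section
/- Let A₀ and A₁ be convex bodies (compact convex sets with nonempty interior) in ℝⁿ, and for t ∈ [0,1] let A_t = {t·a₁ + (1−t)·a₀ : a₀ ∈ A₀, a₁ ∈ A₁} be the Minkowski combination. Then the function t ↦ (vol(A_t))^(1/n) is concave on [0,1], where vol denotes n-dimensional Lebesgue measure. -/
open MeasureTheory Pointwise Set
open scoped ENNReal NNReal

namespace BrunnAux

lemma engm {t : ℝ} (ht0 : 0 < t) (ht1 : t < 1) (a b : ℝ≥0∞) :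
    a ^ (1 - t) * b ^ t ≤ ENNReal.ofReal (1 - t) * a + ENNReal.ofReal t * b := by
  have h1t : (0:ℝ) < 1 - t := by linarith
  rcases eq_or_ne a ⊤ with rfl | ha
  · rcases eq_or_ne b 0 with rfl | hb
    · simp [ENNReal.zero_rpow_of_pos ht0]
    · have : ENNReal.ofReal (1 - t) * (⊤:ℝ≥0∞) = ⊤ :=
        ENNReal.mul_top (by simpa using (ENNReal.ofReal_pos.2 h1t).ne')
      rw [this]
      simp [top_add]
  rcases eq_or_ne b ⊤ with rfl | hb
  · rcases eq_or_ne a 0 with rfl | ha0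
    · simp [ENNReal.zero_rpow_of_pos h1t]
    · have : ENNReal.ofReal t * (⊤:ℝ≥0∞) = ⊤ :=
        ENNReal.mul_top (by simpa using (ENNReal.ofReal_pos.2 ht0).ne')
      rw [this]
      simp
  · lift a to NNReal using ha
    lift b to NNReal using hb
    have key := NNReal.geom_mean_le_arith_mean2_weighted (Real.toNNReal (1-t)) (Real.toNNReal t)
      a b (by
        rw [← Real.toNNReal_add h1t.le ht0.le]
        norm_num)
    have e1 : ((Real.toNNReal (1-t) : NNReal) : ℝ) = 1 - t := Real.coe_toNNReal _ h1t.le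
    have e2 : ((Real.toNNReal t : NNReal) : ℝ) = t := Real.coe_toNNReal _ ht0.le
    rw [e1, e2] at key
    calc (a:ℝ≥0∞) ^ (1-t) * (b:ℝ≥0∞) ^ t
        = ((a ^ (1-t) * b ^ t : NNReal) : ℝ≥0∞) := by
          rw [ENNReal.coe_mul, ENNReal.coe_rpow_of_nonneg _ h1t.le,
            ENNReal.coe_rpow_of_nonneg _ ht0.le]
      _ ≤ ((Real.toNNReal (1-t) * a + Real.toNNReal t * b : NNReal) : ℝ≥0∞) :=
          ENNReal.coe_le_coe.2 key
      _ = ENNReal.ofReal (1 - t) * a + ENNReal.ofReal t * b := by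
          rw [ENNReal.coe_add, ENNReal.coe_mul, ENNReal.coe_mul]
          rfl

lemma sum_compact_le {K L C : Set ℝ} (hK : IsCompact K) (hKne : K.Nonempty)
    (hL : IsCompact L) (hLne : L.Nonempty) (h : K + L ⊆ C) :
    volume K + volume L ≤ volume C := by
  set a := sSup K with ha
  set b := sInf L with hb
  have haK : a ∈ K := hK.sSup_mem hKne
  have hbL : b ∈ L := hL.sInf_mem hLne
  set S : Set ℝ := b +ᵥ K with hS
  set T : Set ℝ := a +ᵥ L with hT
  have hSC : S ⊆ C := by
    rintro x ⟨k, hk, rfl⟩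
    show b + k ∈ C
    rw [add_comm]
    exact h (Set.add_mem_add hk hbL)
  have hTC : T ⊆ C := by
    rintro x ⟨l, hl, rfl⟩
    show a + l ∈ C
    exact h (Set.add_mem_add haK hl)
  have hSle : ∀ x ∈ S, x ≤ a + b := by
    rintro x ⟨k, hk, rfl⟩
    have : k ≤ a := le_csSup hK.bddAbove hk
    show b + k ≤ a + b
    linarith
  have hTge : ∀ x ∈ T, a + b ≤ x := by
    rintro x ⟨l, hl, rfl⟩
    have : b ≤ l := csInf_le hL.bddBelow hl
    show a + b ≤ a + l
    linarith
  have hdisj : Disjoint (S \ {a + b}) T := by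
    rw [Set.disjoint_left]
    rintro x ⟨hxS, hxne⟩ hxT
    exact hxne (le_antisymm (hSle x hxS) (hTge x hxT))
  have hTm : MeasurableSet T := (hL.vadd a).measurableSet
  calc volume K + volume L = volume S + volume T := by
        rw [hS, hT, measure_vadd, measure_vadd]

    _ = volume (S \ {a + b}) + volume T := by
        rw [measure_diff_null (measure_singleton _)]
    _ = volume ((S \ {a + b}) ∪ T) := (measure_union hdisj hTm).symm
    _ ≤ volume C := measure_mono (Set.union_subset (fun x hx => hSC hx.1) hTC)

lemma sum_le {A B C : Set ℝ} (hA : MeasurableSet A) (hAne : A.Nonempty)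
    (hB : MeasurableSet B) (hBne : B.Nonempty) (h : A + B ⊆ C) :
    volume A + volume B ≤ volume C := by
  obtain ⟨a, haA⟩ := hAne
  obtain ⟨b, hbB⟩ := hBne
  refine ENNReal.le_of_forall_pos_le_add fun ε hε hC => ?_
  have hCne : volume C ≠ ⊤ := hC.ne
  have hAfin : volume A ≠ ⊤ := by
    refine ne_top_of_le_ne_top hCne ?_
    calc volume A = volume (b +ᵥ A) := by rw [measure_vadd]
      _ ≤ volume C := measure_mono (by
          rintro x ⟨y, hy, rfl⟩
          show b + y ∈ C
          rw [add_comm]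
          exact h (Set.add_mem_add hy hbB))
  have hBfin : volume B ≠ ⊤ := by
    refine ne_top_of_le_ne_top hCne ?_
    calc volume B = volume (a +ᵥ B) := by rw [measure_vadd]
      _ ≤ volume C := measure_mono (by
          rintro x ⟨y, hy, rfl⟩
          show a + y ∈ C
          exact h (Set.add_mem_add haA hy))
  have hε2 : ((ε : ℝ≥0∞) / 2) ≠ 0 := by
    simp [ENNReal.div_eq_zero_iff, hε.ne']
  obtain ⟨K, hKA, hKc, hKlt⟩ := hA.exists_isCompact_lt_add hAfin hε2
  obtain ⟨L, hLB, hLc, hLlt⟩ := hB.exists_isCompact_lt_add hBfin hε2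
  set K' := K ∪ {a} with hK'
  set L' := L ∪ {b} with hL'
  have hK'c : IsCompact K' := hKc.union isCompact_singleton
  have hL'c : IsCompact L' := hLc.union isCompact_singleton
  have hK'A : K' ⊆ A := Set.union_subset hKA (by simpa using haA)
  have hL'B : L' ⊆ B := Set.union_subset hLB (by simpa using hbB)
  have hmain : volume K' + volume L' ≤ volume C :=
    sum_compact_le hK'c ⟨a, Set.mem_union_right _ rfl⟩ hL'c ⟨b, Set.mem_union_right _ rfl⟩
      ((Set.add_subset_add hK'A hL'B).trans h)
  calc volume A + volume B
      ≤ (volume K' + (ε:ℝ≥0∞)/2) + (volume L' + (ε:ℝ≥0∞)/2) := by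
        refine add_le_add ?_ ?_
        · exact le_trans hKlt.le (add_le_add_left (measure_mono Set.subset_union_left) _)
        · exact le_trans hLlt.le (add_le_add_left (measure_mono Set.subset_union_left) _)
    _ = (volume K' + volume L') + ((ε:ℝ≥0∞)/2 + (ε:ℝ≥0∞)/2) := by ring
    _ ≤ volume C + (ε:ℝ≥0∞) := by
        rw [ENNReal.add_halves]
        exact add_le_add_left hmain _

lemma lintegral_levels {f : ℝ → ℝ≥0∞} (hf : Measurable f) (hf1 : ∀ x, f x ≤ 1) :
    ∫⁻ x, f x = ∫⁻ r in Set.Ioo (0:ℝ) 1, volume {x | ENNReal.ofReal r < f x} := by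
  have hne : ∀ x, f x ≠ ⊤ := fun x => (lt_of_le_of_lt (hf1 x) ENNReal.one_lt_top).ne
  have h1 : ∫⁻ x, f x = ∫⁻ x, ENNReal.ofReal ((f x).toReal) := by
    refine lintegral_congr fun x => ?_
    rw [ENNReal.ofReal_toReal (hne x)]
  have h2 := lintegral_eq_lintegral_meas_lt (volume : Measure ℝ)
    (ae_of_all _ fun x => ENNReal.toReal_nonneg : 0 ≤ᵐ[volume] fun x => (f x).toReal)
    (hf.ennreal_toReal).aemeasurable
  rw [h1, h2]
  have hsplit : Set.Ioi (0:ℝ) = Set.Ioo (0:ℝ) 1 ∪ Set.Ici (1:ℝ) := by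
    ext x
    simp only [Set.mem_Ioi, Set.mem_union, Set.mem_Ioo, Set.mem_Ici]
    constructor
    · intro hx
      rcases lt_or_ge x 1 with h | h
      · exact Or.inl ⟨hx, h⟩
      · exact Or.inr h
    · rintro (⟨h, _⟩ | h) <;> linarith
  have hdisj : Disjoint (Set.Ioo (0:ℝ) 1) (Set.Ici (1:ℝ)) := by
    rw [Set.disjoint_left]
    rintro x ⟨_, h1x⟩ h2x
    simp only [Set.mem_Ici] at h2x
    linarith
  rw [hsplit, lintegral_union measurableSet_Ici hdisj]
  have hzero : ∫⁻ r in Set.Ici (1:ℝ), volume {a | r < (f a).toReal} = 0 := by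
    rw [setLIntegral_congr_fun measurableSet_Ici
      (fun r (hr : r ∈ Set.Ici (1:ℝ)) => ?_), lintegral_zero]
    have : {a : ℝ | r < (f a).toReal} = ∅ := by
      ext a
      simp only [Set.mem_setOf_eq, Set.mem_empty_iff_false, iff_false, not_lt]
      calc (f a).toReal ≤ (1:ℝ≥0∞).toReal :=
            ENNReal.toReal_mono ENNReal.one_ne_top (hf1 a)
        _ = 1 := by simp
        _ ≤ r := hr
    rw [this]
    simp
  rw [hzero, add_zero]
  refine setLIntegral_congr_fun measurableSet_Ioo (fun r hr => ?_)
  congr 1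
  ext a
  simp only [Set.mem_setOf_eq]
  rw [ENNReal.ofReal_lt_iff_lt_toReal (le_of_lt hr.1) (hne a)]

lemma level_ineq {t : ℝ} (ht0 : 0 < t) (ht1 : t < 1)
    {f g h : ℝ → ℝ≥0∞} (hf : Measurable f) (hg : Measurable g) (hh : Measurable h)
    (hfs : ⨆ x, f x = 1) (hgs : ⨆ x, g x = 1)
    (hcond : ∀ x y, f x ^ (1 - t) * g y ^ t ≤ h ((1-t) * x + t * y))
    {r : ℝ} (hr0 : 0 < r) (hr1 : r < 1) :
    ENNReal.ofReal (1-t) * volume {x | ENNReal.ofReal r < f x}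
      + ENNReal.ofReal t * volume {x | ENNReal.ofReal r < g x}
      ≤ volume {x | ENNReal.ofReal r < h x} := by
  have h1t : (0:ℝ) < 1 - t := by linarith
  set ρ := ENNReal.ofReal r with hρ
  have hρ0 : 0 < ρ := ENNReal.ofReal_pos.2 hr0
  have hρ1 : ρ < 1 := by
    rw [hρ, ← ENNReal.ofReal_one]
    exact (ENNReal.ofReal_lt_ofReal_iff one_pos).2 hr1
  have hρtop : ρ ≠ ⊤ := ENNReal.ofReal_ne_top
  set A := {x : ℝ | ρ < f x} with hA
  set B := {x : ℝ | ρ < g x} with hB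
  have hAm : MeasurableSet A := hf measurableSet_Ioi
  have hBm : MeasurableSet B := hg measurableSet_Ioi
  have hAne : A.Nonempty := by
    rw [← hfs, lt_iSup_iff] at hρ1
    exact hρ1
  have hBne : B.Nonempty := by
    rw [← hgs, lt_iSup_iff] at hρ1
    exact hρ1
  have hsub : (1-t) • A + t • B ⊆ {x | ρ < h x} := by
    rintro z ⟨z₁, ⟨x, hx, rfl⟩, z₂, ⟨y, hy, rfl⟩, rfl⟩
    show ρ < h ((1-t) • x + t • y)
    have key : ρ < f x ^ (1-t) * g y ^ t := by
      have : ρ = ρ ^ (1-t) * ρ ^ t := by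
        rw [← ENNReal.rpow_add _ _ hρ0.ne' hρtop]
        norm_num
      rw [this]
      exact ENNReal.mul_lt_mul (ENNReal.rpow_lt_rpow hx h1t) (ENNReal.rpow_lt_rpow hy ht0)
    calc ρ < f x ^ (1-t) * g y ^ t := key
      _ ≤ h ((1-t) * x + t * y) := hcond x y
      _ = h ((1-t) • x + t • y) := by rw [smul_eq_mul, smul_eq_mul]
  have hsum := sum_le (hAm.const_smul_of_ne_zero (by positivity : (1-t) ≠ 0))
    (hAne.smul_set) (hBm.const_smul_of_ne_zero ht0.ne') (hBne.smul_set) hsub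
  have hrk : Module.finrank ℝ ℝ = 1 := Module.finrank_self ℝ
  have hvA : volume ((1-t) • A) = ENNReal.ofReal (1-t) * volume A := by
    rw [Measure.addHaar_smul_of_nonneg volume h1t.le, hrk, pow_one]
  have hvB : volume (t • B) = ENNReal.ofReal t * volume B := by
    rw [Measure.addHaar_smul_of_nonneg volume ht0.le, hrk, pow_one]
  rw [hvA, hvB] at hsum
  exact hsum

lemma div_mul_div {a b c d : ℝ≥0∞} (hb0 : b ≠ 0) (hbt : b ≠ ⊤) :
    a / b * (c / d) = a * c / (b * d) := by
  rw [div_eq_mul_inv, div_eq_mul_inv, div_eq_mul_inv, ENNReal.mul_inv (Or.inl hb0) (Or.inl hbt)]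
  ring

lemma pl1_norm {t : ℝ} (ht0 : 0 < t) (ht1 : t < 1)
    {f g h : ℝ → ℝ≥0∞} (hf : Measurable f) (hg : Measurable g) (hh : Measurable h)
    (hf1 : ∀ x, f x ≤ 1) (hg1 : ∀ x, g x ≤ 1)
    (hfs : ⨆ x, f x = 1) (hgs : ⨆ x, g x = 1)
    (hcond : ∀ x y, f x ^ (1 - t) * g y ^ t ≤ h ((1-t) * x + t * y)) :
    ENNReal.ofReal (1-t) * (∫⁻ x, f x) + ENNReal.ofReal t * (∫⁻ x, g x) ≤ ∫⁻ x, h x := by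
  have h1t : (0:ℝ) < 1 - t := by linarith
  set h' : ℝ → ℝ≥0∞ := fun x => min (h x) 1 with hh'def
  have hh'm : Measurable h' := hh.min measurable_const
  have hh'1 : ∀ x, h' x ≤ 1 := fun x => min_le_right _ _
  have hcond' : ∀ x y, f x ^ (1 - t) * g y ^ t ≤ h' ((1-t) * x + t * y) := by
    intro x y
    refine le_min (hcond x y) ?_
    calc f x ^ (1-t) * g y ^ t ≤ (1:ℝ≥0∞) ^ (1-t) * (1:ℝ≥0∞) ^ t :=
          mul_le_mul' (ENNReal.rpow_le_rpow (hf1 x) h1t.le) (ENNReal.rpow_le_rpow (hg1 y) ht0.le)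
      _ = 1 := by simp
  have hint : ∫⁻ x, h' x ≤ ∫⁻ x, h x := lintegral_mono fun x => min_le_left _ _
  refine le_trans ?_ hint
  rw [lintegral_levels hf hf1, lintegral_levels hg hg1, lintegral_levels hh'm hh'1]
  have step1 : ∫⁻ r in Set.Ioo (0:ℝ) 1,
      (ENNReal.ofReal (1-t) * volume {x | ENNReal.ofReal r < f x}
        + ENNReal.ofReal t * volume {x | ENNReal.ofReal r < g x})
      ≤ ∫⁻ r in Set.Ioo (0:ℝ) 1, volume {x | ENNReal.ofReal r < h' x} := by
    refine lintegral_mono_ae ((ae_restrict_iff' measurableSet_Ioo).2 (ae_of_all _ ?_))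
    rintro r ⟨hr0, hr1⟩
    exact level_ineq ht0 ht1 hf hg hh'm hfs hgs hcond' hr0 hr1
  refine le_trans ?_ step1
  calc ENNReal.ofReal (1-t) * (∫⁻ r in Set.Ioo (0:ℝ) 1, volume {x | ENNReal.ofReal r < f x})
        + ENNReal.ofReal t * (∫⁻ r in Set.Ioo (0:ℝ) 1, volume {x | ENNReal.ofReal r < g x})
      ≤ (∫⁻ r in Set.Ioo (0:ℝ) 1, ENNReal.ofReal (1-t) * volume {x | ENNReal.ofReal r < f x})
        + ∫⁻ r in Set.Ioo (0:ℝ) 1, ENNReal.ofReal t * volume {x | ENNReal.ofReal r < g x} :=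
        add_le_add (lintegral_const_mul_le _ _) (lintegral_const_mul_le _ _)
    _ ≤ _ := le_lintegral_add _ _

lemma pl1_bdd {t : ℝ} (ht0 : 0 < t) (ht1 : t < 1)
    {f g h : ℝ → ℝ≥0∞} (hf : Measurable f) (hg : Measurable g) (hh : Measurable h)
    (hfb : (⨆ x, f x) ≠ ⊤) (hgb : (⨆ x, g x) ≠ ⊤)
    (hcond : ∀ x y, f x ^ (1 - t) * g y ^ t ≤ h ((1-t) * x + t * y)) :
    (∫⁻ x, f x) ^ (1-t) * (∫⁻ x, g x) ^ t ≤ ∫⁻ x, h x := by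
  have h1t : (0:ℝ) < 1 - t := by linarith
  set Sf := ⨆ x, f x with hSf
  set Sg := ⨆ x, g x with hSg
  rcases eq_or_ne Sf 0 with hSf0 | hSf0
  · have : ∫⁻ x, f x = 0 := by
      have : ∀ x, f x = 0 := fun x => le_antisymm (hSf0 ▸ le_iSup f x) zero_le
      simp [lintegral_congr this]
    rw [this, ENNReal.zero_rpow_of_pos h1t, zero_mul]
    exact zero_le
  rcases eq_or_ne Sg 0 with hSg0 | hSg0
  · have : ∫⁻ x, g x = 0 := by
      have : ∀ x, g x = 0 := fun x => le_antisymm (hSg0 ▸ le_iSup g x) zero_le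
      simp [lintegral_congr this]
    rw [this, ENNReal.zero_rpow_of_pos ht0, mul_zero]
    exact zero_le
  set c : ℝ≥0∞ := Sf ^ (1-t) * Sg ^ t with hc
  have hSfpos : 0 < Sf := pos_iff_ne_zero.2 hSf0
  have hSgpos : 0 < Sg := pos_iff_ne_zero.2 hSg0
  have hrf0 : Sf ^ (1-t) ≠ 0 := (ENNReal.rpow_pos hSfpos hfb).ne'
  have hrg0 : Sg ^ t ≠ 0 := (ENNReal.rpow_pos hSgpos hgb).ne'
  have hrft : Sf ^ (1-t) ≠ ⊤ := ENNReal.rpow_ne_top_of_nonneg h1t.le hfb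
  have hc0 : c ≠ 0 := mul_ne_zero hrf0 hrg0
  have hctop : c ≠ ⊤ := by
    simp only [hc]
    exact ENNReal.mul_ne_top (ENNReal.rpow_ne_top_of_nonneg h1t.le hfb)
      (ENNReal.rpow_ne_top_of_nonneg ht0.le hgb)
  set f' : ℝ → ℝ≥0∞ := fun x => f x / Sf with hf'def
  set g' : ℝ → ℝ≥0∞ := fun x => g x / Sg with hg'def
  set h'' : ℝ → ℝ≥0∞ := fun x => h x / c with hh''def
  have hf'm : Measurable f' := hf.div measurable_const
  have hg'm : Measurable g' := hg.div measurable_const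
  have hh''m : Measurable h'' := hh.div measurable_const
  have hf'1 : ∀ x, f' x ≤ 1 := fun x =>
    ENNReal.div_le_of_le_mul (by rw [one_mul]; exact le_iSup f x)
  have hg'1 : ∀ x, g' x ≤ 1 := fun x =>
    ENNReal.div_le_of_le_mul (by rw [one_mul]; exact le_iSup g x)
  have hf's : ⨆ x, f' x = 1 := by
    rw [hf'def]
    rw [← ENNReal.iSup_div, ← hSf, ENNReal.div_self hSf0 hfb]
  have hg's : ⨆ x, g' x = 1 := by
    rw [hg'def]
    rw [← ENNReal.iSup_div, ← hSg, ENNReal.div_self hSg0 hgb]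
  have hcond' : ∀ x y, f' x ^ (1 - t) * g' y ^ t ≤ h'' ((1-t) * x + t * y) := by
    intro x y
    show (f x / Sf) ^ (1-t) * (g y / Sg) ^ t ≤ h ((1-t)*x + t*y) / c
    rw [ENNReal.div_rpow_of_nonneg _ _ h1t.le, ENNReal.div_rpow_of_nonneg _ _ ht0.le,
      div_mul_div hrf0 hrft, ← hc]
    exact ENNReal.div_le_div_right (hcond x y) c
  have key := pl1_norm ht0 ht1 hf'm hg'm hh''m hf'1 hg'1 hf's hg's hcond'
  have hSftop : Sf ≠ ⊤ := hfb
  have hSgtop : Sg ≠ ⊤ := hgb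
  have hint_f : ∫⁻ x, f' x = (∫⁻ x, f x) / Sf := by
    rw [hf'def]
    simp only [div_eq_mul_inv]
    rw [lintegral_mul_const _ hf]
  have hint_g : ∫⁻ x, g' x = (∫⁻ x, g x) / Sg := by
    rw [hg'def]
    simp only [div_eq_mul_inv]
    rw [lintegral_mul_const _ hg]
  have hint_h : ∫⁻ x, h'' x = (∫⁻ x, h x) / c := by
    rw [hh''def]
    simp only [div_eq_mul_inv]
    rw [lintegral_mul_const _ hh]
  rw [hint_f, hint_g, hint_h] at key
  have amgm := engm ht0 ht1 ((∫⁻ x, f x) / Sf) ((∫⁻ x, g x) / Sg)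
  have key2 : ((∫⁻ x, f x) / Sf) ^ (1-t) * ((∫⁻ x, g x) / Sg) ^ t ≤ (∫⁻ x, h x) / c :=
    le_trans amgm key
  have expand : ((∫⁻ x, f x) / Sf) ^ (1-t) * ((∫⁻ x, g x) / Sg) ^ t
      = ((∫⁻ x, f x) ^ (1-t) * (∫⁻ x, g x) ^ t) / c := by
    rw [ENNReal.div_rpow_of_nonneg _ _ h1t.le, ENNReal.div_rpow_of_nonneg _ _ ht0.le,
      div_mul_div hrf0 hrft, hc]
  rw [expand] at key2
  calc (∫⁻ x, f x) ^ (1-t) * (∫⁻ x, g x) ^ t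
      = c * (((∫⁻ x, f x) ^ (1-t) * (∫⁻ x, g x) ^ t) / c) := (ENNReal.mul_div_cancel hc0 hctop).symm
    _ ≤ c * ((∫⁻ x, h x) / c) := mul_le_mul_right key2 c
    _ = ∫⁻ x, h x := ENNReal.mul_div_cancel hc0 hctop

lemma iSup_rpow {c : ℝ} (hc : 0 < c) (u : ℕ → ℝ≥0∞) : (⨆ n, u n) ^ c = ⨆ n, u n ^ c := by
  apply le_antisymm
  · have h1 : (⨆ n, u n) ≤ (⨆ n, u n ^ c) ^ (1/c) := by
      refine iSup_le fun n => ?_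
      have : u n = (u n ^ c) ^ (1/c) := by
        rw [← ENNReal.rpow_mul, mul_one_div_cancel hc.ne', ENNReal.rpow_one]
      rw [this]
      exact ENNReal.rpow_le_rpow (le_iSup (fun n => u n ^ c) n) (by positivity)
    calc (⨆ n, u n) ^ c ≤ ((⨆ n, u n ^ c) ^ (1/c)) ^ c := ENNReal.rpow_le_rpow h1 hc.le
      _ = ⨆ n, u n ^ c := by
        rw [← ENNReal.rpow_mul, one_div_mul_cancel hc.ne', ENNReal.rpow_one]
  · exact iSup_le fun n => ENNReal.rpow_le_rpow (le_iSup u n) hc.le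

lemma iSup_mul_iSup_mono {u v : ℕ → ℝ≥0∞} (hu : Monotone u) (hv : Monotone v) :
    (⨆ n, u n) * (⨆ n, v n) = ⨆ n, u n * v n := by
  rw [ENNReal.iSup_mul]
  simp_rw [ENNReal.mul_iSup]
  apply le_antisymm
  · refine iSup_le fun i => iSup_le fun j => le_iSup_of_le (max i j) ?_
    exact mul_le_mul' (hu (le_max_left i j)) (hv (le_max_right i j))
  · exact iSup_le fun n => le_iSup_of_le n (le_iSup_of_le n le_rfl)

lemma pl1 {t : ℝ} (ht0 : 0 < t) (ht1 : t < 1)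
    {f g h : ℝ → ℝ≥0∞} (hf : Measurable f) (hg : Measurable g) (hh : Measurable h)
    (hcond : ∀ x y, f x ^ (1 - t) * g y ^ t ≤ h ((1-t) * x + t * y)) :
    (∫⁻ x, f x) ^ (1-t) * (∫⁻ x, g x) ^ t ≤ ∫⁻ x, h x := by
  have h1t : (0:ℝ) < 1 - t := by linarith
  set fM : ℕ → ℝ → ℝ≥0∞ := fun M x => min (f x) M with hfM
  set gM : ℕ → ℝ → ℝ≥0∞ := fun M x => min (g x) M with hgM
  have hfMm : ∀ M, Measurable (fM M) := fun M => hf.min measurable_const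
  have hgMm : ∀ M, Measurable (gM M) := fun M => hg.min measurable_const
  have hkey : ∀ M : ℕ, (∫⁻ x, fM M x) ^ (1-t) * (∫⁻ x, gM M x) ^ t ≤ ∫⁻ x, h x := by
    intro M
    refine pl1_bdd ht0 ht1 (hfMm M) (hgMm M) hh ?_ ?_ ?_
    · exact ne_top_of_le_ne_top (ENNReal.natCast_ne_top M) (iSup_le fun x => min_le_right _ _)
    · exact ne_top_of_le_ne_top (ENNReal.natCast_ne_top M) (iSup_le fun x => min_le_right _ _)
    · intro x y
      refine le_trans (mul_le_mul' (ENNReal.rpow_le_rpow (min_le_left _ _) h1t.le)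
        (ENNReal.rpow_le_rpow (min_le_left _ _) ht0.le)) (hcond x y)
  have hmono_f : Monotone fun M : ℕ => ∫⁻ x, fM M x := by
    intro M N hMN
    exact lintegral_mono fun x => min_le_min le_rfl (by exact_mod_cast Nat.cast_le.2 hMN)
  have hmono_g : Monotone fun M : ℕ => ∫⁻ x, gM M x := by
    intro M N hMN
    exact lintegral_mono fun x => min_le_min le_rfl (by exact_mod_cast Nat.cast_le.2 hMN)
  have hsup_min : ∀ (v : ℝ≥0∞), (⨆ M : ℕ, min v (M : ℝ≥0∞)) = v := by
    intro v
    apply le_antisymm (iSup_le fun M => min_le_left _ _)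
    rcases eq_or_ne v ⊤ with rfl | hv
    · have : (⨆ M : ℕ, min (⊤:ℝ≥0∞) (M:ℝ≥0∞)) = ⨆ M : ℕ, (M:ℝ≥0∞) := by
        refine iSup_congr fun M => ?_
        rw [min_eq_right le_top]
      rw [this, ENNReal.iSup_natCast]
    · obtain ⟨M, hM⟩ := ENNReal.exists_nat_gt hv
      refine le_iSup_of_le M ?_
      rw [min_eq_left hM.le]
  have hsup_f : (⨆ M : ℕ, ∫⁻ x, fM M x) = ∫⁻ x, f x := by
    rw [← lintegral_iSup (fun M => hfMm M) (fun M N hMN x => min_le_min le_rfl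
      (by exact_mod_cast Nat.cast_le.2 hMN))]
    exact lintegral_congr fun x => hsup_min (f x)
  have hsup_g : (⨆ M : ℕ, ∫⁻ x, gM M x) = ∫⁻ x, g x := by
    rw [← lintegral_iSup (fun M => hgMm M) (fun M N hMN x => min_le_min le_rfl
      (by exact_mod_cast Nat.cast_le.2 hMN))]
    exact lintegral_congr fun x => hsup_min (g x)
  calc (∫⁻ x, f x) ^ (1-t) * (∫⁻ x, g x) ^ t
      = (⨆ M : ℕ, ∫⁻ x, fM M x) ^ (1-t) * (⨆ M : ℕ, ∫⁻ x, gM M x) ^ t := by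
        rw [hsup_f, hsup_g]
    _ = (⨆ M : ℕ, (∫⁻ x, fM M x) ^ (1-t)) * ⨆ M : ℕ, (∫⁻ x, gM M x) ^ t := by
        rw [iSup_rpow h1t, iSup_rpow ht0]
    _ = ⨆ M : ℕ, (∫⁻ x, fM M x) ^ (1-t) * (∫⁻ x, gM M x) ^ t :=
        iSup_mul_iSup_mono (fun M N hMN => ENNReal.rpow_le_rpow (hmono_f hMN) h1t.le)
          (fun M N hMN => ENNReal.rpow_le_rpow (hmono_g hMN) ht0.le)
    _ ≤ ∫⁻ x, h x := iSup_le hkey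

lemma comb_cons {n : ℕ} (t s₀ s₁ : ℝ) (x y : Fin n → ℝ) :
    (1-t) • (Fin.cons s₀ x : Fin (n+1) → ℝ) + t • (Fin.cons s₁ y : Fin (n+1) → ℝ)
      = Fin.cons ((1-t)*s₀ + t*s₁) ((1-t) • x + t • y) := by
  funext j
  refine Fin.cases ?_ (fun i => ?_) j <;>
    simp [Pi.add_apply, Pi.smul_apply, smul_eq_mul]

lemma pl_pi : ∀ (n : ℕ) {t : ℝ}, 0 < t → t < 1 →
    ∀ {f g h : (Fin n → ℝ) → ℝ≥0∞}, Measurable f → Measurable g → Measurable h →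
    (∀ x y, f x ^ (1-t) * g y ^ t ≤ h ((1-t) • x + t • y)) →
    (∫⁻ x, f x) ^ (1-t) * (∫⁻ x, g x) ^ t ≤ ∫⁻ x, h x := by
  intro n
  induction n with
  | zero =>
    intro t ht0 ht1 f g h hf hg hh hcond
    have huniv : (volume : Measure (Fin 0 → ℝ)) Set.univ = 1 := by
      simp [volume_pi, Measure.pi_univ]
    have hint : ∀ φ : (Fin 0 → ℝ) → ℝ≥0∞, ∫⁻ x, φ x = φ default := by
      intro φ
      rw [lintegral_unique φ, huniv, mul_one]
      exact congrArg φ (Subsingleton.elim _ _)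
    rw [hint, hint, hint]
    have key := hcond default default
    have heq : (1-t) • (default : Fin 0 → ℝ) + t • (default : Fin 0 → ℝ) = default :=
      Subsingleton.elim _ _
    rwa [heq] at key
  | succ n ih =>
    intro t ht0 ht1 f g h hf hg hh hcond
    set e := MeasurableEquiv.piFinSuccAbove (fun _ : Fin (n+1) => ℝ) 0 with he
    have hmp : MeasurePreserving (⇑e) volume volume :=
      volume_preserving_piFinSuccAbove (fun _ : Fin (n+1) => ℝ) 0
    have hsymm : ∀ (s : ℝ) (x : Fin n → ℝ), e.symm (s, x) = Fin.cons s x := by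
      intro s x
      rw [he]
      simp [MeasurableEquiv.piFinSuccAbove_symm_apply, Fin.insertNth_zero]
      rfl
    have htrans : ∀ φ : (Fin (n+1) → ℝ) → ℝ≥0∞, Measurable φ →
        ∫⁻ x, φ x = ∫⁻ s : ℝ, ∫⁻ x : Fin n → ℝ, φ (e.symm (s, x)) := by
      intro φ hφ
      rw [← (MeasurePreserving.symm e hmp).lintegral_comp hφ, Measure.volume_eq_prod]
      exact lintegral_prod _ ((hφ.comp e.symm.measurable).aemeasurable)
    have hFm : Measurable fun s : ℝ => ∫⁻ x : Fin n → ℝ, f (e.symm (s, x)) :=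
      Measurable.lintegral_prod_right (hf.comp e.symm.measurable)
    have hGm : Measurable fun s : ℝ => ∫⁻ x : Fin n → ℝ, g (e.symm (s, x)) :=
      Measurable.lintegral_prod_right (hg.comp e.symm.measurable)
    have hHm : Measurable fun s : ℝ => ∫⁻ x : Fin n → ℝ, h (e.symm (s, x)) :=
      Measurable.lintegral_prod_right (hh.comp e.symm.measurable)
    have hinner : ∀ s : ℝ, Measurable fun x : Fin n → ℝ => f (e.symm (s, x)) := fun s =>
      hf.comp (e.symm.measurable.comp (measurable_const.prodMk measurable_id))
    have hinnerg : ∀ s : ℝ, Measurable fun x : Fin n → ℝ => g (e.symm (s, x)) := fun s =>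
      hg.comp (e.symm.measurable.comp (measurable_const.prodMk measurable_id))
    have hinnerh : ∀ s : ℝ, Measurable fun x : Fin n → ℝ => h (e.symm (s, x)) := fun s =>
      hh.comp (e.symm.measurable.comp (measurable_const.prodMk measurable_id))
    have condF : ∀ s₀ s₁ : ℝ,
        (∫⁻ x : Fin n → ℝ, f (e.symm (s₀, x))) ^ (1-t)
          * (∫⁻ x : Fin n → ℝ, g (e.symm (s₁, x))) ^ t
        ≤ ∫⁻ x : Fin n → ℝ, h (e.symm ((1-t) * s₀ + t * s₁, x)) := by
      intro s₀ s₁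
      refine ih ht0 ht1 (hinner s₀) (hinnerg s₁) (hinnerh _) ?_
      intro x y
      have key := hcond (e.symm (s₀, x)) (e.symm (s₁, y))
      simp only [hsymm] at key ⊢
      rwa [comb_cons] at key
    have final := pl1 ht0 ht1 hFm hGm hHm condF
    rw [htrans f hf, htrans g hg, htrans h hh]
    exact final

lemma bm_mult {n : ℕ} {t : ℝ} (ht0 : 0 < t) (ht1 : t < 1) {X Y : Set (Fin n → ℝ)}
    (hX : MeasurableSet X) (hY : MeasurableSet Y)
    (hC : MeasurableSet ((1-t) • X + t • Y)) :
    volume X ^ (1-t) * volume Y ^ t ≤ volume ((1-t) • X + t • Y) := by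
  have h1t : (0:ℝ) < 1 - t := by linarith
  set C := (1-t) • X + t • Y with hCdef
  have hf : Measurable (X.indicator (fun _ => (1:ℝ≥0∞))) := measurable_const.indicator hX
  have hg : Measurable (Y.indicator (fun _ => (1:ℝ≥0∞))) := measurable_const.indicator hY
  have hh : Measurable (C.indicator (fun _ => (1:ℝ≥0∞))) := measurable_const.indicator hC
  have hcond : ∀ x y, (X.indicator (fun _ => (1:ℝ≥0∞)) x) ^ (1-t)
      * (Y.indicator (fun _ => (1:ℝ≥0∞)) y) ^ t
      ≤ C.indicator (fun _ => (1:ℝ≥0∞)) ((1-t) • x + t • y) := by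
    intro x y
    by_cases hx : x ∈ X
    · by_cases hy : y ∈ Y
      · have hmem : (1-t) • x + t • y ∈ C :=
          Set.add_mem_add (Set.smul_mem_smul_set hx) (Set.smul_mem_smul_set hy)
        rw [Set.indicator_of_mem hx, Set.indicator_of_mem hy, Set.indicator_of_mem hmem]
        simp
      · rw [Set.indicator_of_notMem hy]
        rw [ENNReal.zero_rpow_of_pos ht0, mul_zero]
        exact zero_le
    · rw [Set.indicator_of_notMem hx]
      rw [ENNReal.zero_rpow_of_pos h1t, zero_mul]
      exact zero_le
  have key := pl_pi n ht0 ht1 hf hg hh hcond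
  have eX : ∫⁻ x, X.indicator (fun _ => (1:ℝ≥0∞)) x = volume X := by
    rw [lintegral_indicator hX]
    simp
  have eY : ∫⁻ x, Y.indicator (fun _ => (1:ℝ≥0∞)) x = volume Y := by
    rw [lintegral_indicator hY]
    simp
  have eC : ∫⁻ x, C.indicator (fun _ => (1:ℝ≥0∞)) x = volume C := by
    rw [lintegral_indicator hC]
    simp
  rwa [eX, eY, eC] at key

lemma rpow_inv_natCast {x : ℝ} (hx : 0 ≤ x) {n : ℕ} (hn : 0 < n) :
    (x ^ n) ^ ((1:ℝ)/n) = x := by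
  rw [← Real.rpow_natCast x n, ← Real.rpow_mul hx]
  rw [mul_one_div, div_self (by exact_mod_cast hn.ne' : (n:ℝ) ≠ 0), Real.rpow_one]

lemma bm_power {n : ℕ} (hn : 0 < n) {a b : ℝ} (ha : 0 < a) (hb : 0 < b)
    {X Y : Set (Fin n → ℝ)} (hXc : IsCompact X) (hYc : IsCompact Y)
    (hXpos : 0 < volume X) (hYpos : 0 < volume Y) :
    ENNReal.ofReal ((a * (volume X).toReal ^ ((1:ℝ)/n)
      + b * (volume Y).toReal ^ ((1:ℝ)/n)) ^ n)
      ≤ volume (a • X + b • Y) := by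
  have hrk : Module.finrank ℝ (Fin n → ℝ) = n := by simp
  set α := (volume X).toReal ^ ((1:ℝ)/n) with hα
  set β := (volume Y).toReal ^ ((1:ℝ)/n) with hβ
  have hXfin : volume X ≠ ⊤ := hXc.measure_lt_top.ne
  have hYfin : volume Y ≠ ⊤ := hYc.measure_lt_top.ne
  have hXt : 0 < (volume X).toReal := ENNReal.toReal_pos hXpos.ne' hXfin
  have hYt : 0 < (volume Y).toReal := ENNReal.toReal_pos hYpos.ne' hYfin
  have hα0 : 0 < α := Real.rpow_pos_of_pos hXt _
  have hβ0 : 0 < β := Real.rpow_pos_of_pos hYt _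
  set γ := a * α + b * β with hγ
  have hγ0 : 0 < γ := by positivity
  set θ := b * β / γ with hθ
  have hθ0 : 0 < θ := by positivity
  have hθ1' : 1 - θ = a * α / γ := by
    field_simp [hθ, hγ]
    rw [hθ, sub_mul, div_mul_cancel₀ _ hγ0.ne', hγ]
    ring
  have hθ1 : θ < 1 := by
    rw [← sub_pos, hθ1']
    positivity
  set c := γ / α with hc
  set d := γ / β with hd
  have hc0 : 0 < c := by positivity
  have hd0 : 0 < d := by positivity
  have hac : (1 - θ) * c = a := by
    rw [hθ1', hc]
    field_simp
  have hbd : θ * d = b := by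
    rw [hθ, hd]
    field_simp
  have hseteq : a • X + b • Y = (1-θ) • (c • X) + θ • (d • Y) := by
    rw [smul_smul, smul_smul, hac, hbd]
  -- measurability / compactness
  have hcXc : IsCompact (c • X) := hXc.smul c
  have hdYc : IsCompact (d • Y) := hYc.smul d
  have hCc : IsCompact ((1-θ) • (c • X) + θ • (d • Y)) :=
    ((hcXc.smul (1-θ)).add (hdYc.smul θ))
  have key := bm_mult hθ0 hθ1 hcXc.measurableSet hdYc.measurableSet hCc.measurableSet
  -- compute volumes
  have hαn : α ^ n = (volume X).toReal := by
    rw [hα, ← Real.rpow_natCast ((volume X).toReal ^ ((1:ℝ)/n)) n, ← Real.rpow_mul hXt.le]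
    rw [one_div, inv_mul_cancel₀ (by exact_mod_cast hn.ne' : (n:ℝ) ≠ 0), Real.rpow_one]
  have hβn : β ^ n = (volume Y).toReal := by
    rw [hβ, ← Real.rpow_natCast ((volume Y).toReal ^ ((1:ℝ)/n)) n, ← Real.rpow_mul hYt.le]
    rw [one_div, inv_mul_cancel₀ (by exact_mod_cast hn.ne' : (n:ℝ) ≠ 0), Real.rpow_one]
  have hvolX : volume X = ENNReal.ofReal (α ^ n) := by
    rw [hαn, ENNReal.ofReal_toReal hXfin]
  have hvolY : volume Y = ENNReal.ofReal (β ^ n) := by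
    rw [hβn, ENNReal.ofReal_toReal hYfin]
  have hvcX : volume (c • X) = ENNReal.ofReal (γ ^ n) := by
    rw [Measure.addHaar_smul_of_nonneg volume hc0.le, hrk, hvolX, ← ENNReal.ofReal_mul (by positivity)]
    congr 1
    rw [← mul_pow, hc]
    congr 1
    field_simp
  have hvdY : volume (d • Y) = ENNReal.ofReal (γ ^ n) := by
    rw [Measure.addHaar_smul_of_nonneg volume hd0.le, hrk, hvolY, ← ENNReal.ofReal_mul (by positivity)]
    congr 1
    rw [← mul_pow, hd]
    congr 1
    field_simp
  rw [hvcX, hvdY] at key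
  have hV0 : ENNReal.ofReal (γ ^ n) ≠ 0 := by
    simp only [ne_eq, ENNReal.ofReal_eq_zero, not_le]
    positivity
  have hVtop : ENNReal.ofReal (γ ^ n) ≠ ⊤ := ENNReal.ofReal_ne_top
  have hVpow : ENNReal.ofReal (γ ^ n) ^ (1-θ) * ENNReal.ofReal (γ ^ n) ^ θ
      = ENNReal.ofReal (γ ^ n) := by
    rw [← ENNReal.rpow_add _ _ hV0 hVtop]
    norm_num
  rw [hVpow] at key
  rw [hseteq]
  exact key

end BrunnAux

theorem brunn_minkowski_power_concave (n : ℕ) (hn : 0 < n)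
    (A₀ A₁ : Set (Fin n → ℝ))
    (h₀c : IsCompact A₀) (h₀conv : Convex ℝ A₀) (h₀i : (interior A₀).Nonempty)
    (h₁c : IsCompact A₁) (h₁conv : Convex ℝ A₁) (h₁i : (interior A₁).Nonempty) :
    ConcaveOn ℝ (Set.Icc (0:ℝ) 1)
      (fun t : ℝ => (volume (t • A₁ + (1 - t) • A₀)).toReal ^ ((1:ℝ) / n)) := by
  have h₀ne : A₀.Nonempty := h₀i.mono interior_subset
  have h₁ne : A₁.Nonempty := h₁i.mono interior_subset
  have hcomp : ∀ t : ℝ, IsCompact (t • A₁ + (1-t) • A₀) :=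
    fun t => (h₁c.smul t).add (h₀c.smul (1-t))
  have hfin : ∀ t : ℝ, volume (t • A₁ + (1-t) • A₀) ≠ ⊤ :=
    fun t => (hcomp t).measure_lt_top.ne
  have hpos : ∀ t : ℝ, t ∈ Set.Icc (0:ℝ) 1 → 0 < volume (t • A₁ + (1-t) • A₀) := by
    intro t ht
    rcases lt_or_eq_of_le ht.2 with h1 | h1
    · have hopen : IsOpen (t • A₁ + (1-t) • interior A₀) :=
        IsOpen.add_left (isOpen_interior.smul₀ (by linarith : (1:ℝ) - t ≠ 0))
      obtain ⟨x₁, hx₁⟩ := h₁ne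
      obtain ⟨y₀, hy₀⟩ := h₀i
      have hne : (t • A₁ + (1-t) • interior A₀).Nonempty :=
        ⟨t • x₁ + (1-t) • y₀, Set.add_mem_add (Set.smul_mem_smul_set hx₁)
          (Set.smul_mem_smul_set hy₀)⟩
      calc (0:ℝ≥0∞) < volume (t • A₁ + (1-t) • interior A₀) := hopen.measure_pos volume hne
        _ ≤ volume (t • A₁ + (1-t) • A₀) := measure_mono
            (Set.add_subset_add_left (Set.smul_set_mono interior_subset))
    · have ht0 : (0:ℝ) < t := by
        rw [h1]; norm_num
      have hopen : IsOpen (t • interior A₁ + (1-t) • A₀) :=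
        IsOpen.add_right (isOpen_interior.smul₀ ht0.ne')
      obtain ⟨x₁, hx₁⟩ := h₁i
      obtain ⟨y₀, hy₀⟩ := h₀ne
      have hne : (t • interior A₁ + (1-t) • A₀).Nonempty :=
        ⟨t • x₁ + (1-t) • y₀, Set.add_mem_add (Set.smul_mem_smul_set hx₁)
          (Set.smul_mem_smul_set hy₀)⟩
      calc (0:ℝ≥0∞) < volume (t • interior A₁ + (1-t) • A₀) := hopen.measure_pos volume hne
        _ ≤ volume (t • A₁ + (1-t) • A₀) := measure_mono
            (Set.add_subset_add_right (Set.smul_set_mono interior_subset))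
  refine ⟨convex_Icc 0 1, ?_⟩
  intro u hu v hv a b ha hb hab
  simp only [smul_eq_mul]
  set s := a * u + b * v with hs
  have hcomb : a • (u • A₁ + (1-u) • A₀) + b • (v • A₁ + (1-v) • A₀)
      = s • A₁ + (1-s) • A₀ := by
    rw [smul_add, smul_add, smul_smul, smul_smul, smul_smul, smul_smul,
      add_add_add_comm]
    have e1 : (a * u) • A₁ + (b * v) • A₁ = s • A₁ := by
      rw [← h₁conv.add_smul (mul_nonneg ha hu.1) (mul_nonneg hb hv.1)]
    have e2 : (a * (1-u)) • A₀ + (b * (1-v)) • A₀ = (1-s) • A₀ := by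
      rw [← h₀conv.add_smul (mul_nonneg ha (by linarith [hu.2] : (0:ℝ) ≤ 1 - u))
        (mul_nonneg hb (by linarith [hv.2] : (0:ℝ) ≤ 1 - v))]
      congr 1
      linear_combination hab
    rw [e1, e2]
  rcases eq_or_lt_of_le ha with ha0 | ha0
  · have hb1 : b = 1 := by linarith
    have hsv : s = v := by rw [hs, ← ha0, hb1]; ring
    rw [← ha0, hb1, hsv]
    simp
  rcases eq_or_lt_of_le hb with hb0 | hb0
  · have ha1 : a = 1 := by linarith
    have hsu : s = u := by rw [hs, ← hb0, ha1]; ring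
    rw [← hb0, ha1, hsu]
    simp
  · have key := BrunnAux.bm_power hn ha0 hb0 (hcomp u) (hcomp v) (hpos u hu) (hpos v hv)
    rw [hcomb] at key
    set L := a * (volume (u • A₁ + (1-u) • A₀)).toReal ^ ((1:ℝ)/n)
      + b * (volume (v • A₁ + (1-v) • A₀)).toReal ^ ((1:ℝ)/n) with hL
    have hL0 : (0:ℝ) ≤ L := by positivity
    have h1 : L ^ n ≤ (volume (s • A₁ + (1-s) • A₀)).toReal := by
      rw [← ENNReal.ofReal_le_iff_le_toReal (hfin s)]
      exact key
    calc a * (volume (u • A₁ + (1-u) • A₀)).toReal ^ ((1:ℝ)/n)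
          + b * (volume (v • A₁ + (1-v) • A₀)).toReal ^ ((1:ℝ)/n)
        = (L ^ n) ^ ((1:ℝ)/n) := (BrunnAux.rpow_inv_natCast hL0 hn).symm
      _ ≤ ((volume (s • A₁ + (1-s) • A₀)).toReal) ^ ((1:ℝ)/n) :=
          Real.rpow_le_rpow (by positivity) h1 (by positivity)
end

section
/- Let 𝒜 be a convex body in ℝ^(n+1) = ℝ × ℝⁿ, and for t ∈ ℝ let A_t = {a ∈ ℝⁿ : (t,a) ∈ 𝒜} be the slice at height t. Then t ↦ (vol(A_t))^(1/n) is concave on the interval of t for which A_t is nonempty. -/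
open MeasureTheory Set Pointwise ENNReal NNReal

/-- One-dimensional Brunn–Minkowski: if `U` contains `S + T` with `S, T` nonempty
measurable, then `vol S + vol T ≤ vol U`. -/
lemma oneDimBM {S T U : Set ℝ} (hS : MeasurableSet S) (hT : MeasurableSet T)
    (hSne : S.Nonempty) (hTne : T.Nonempty) (hU : S + T ⊆ U) :
    volume S + volume T ≤ volume U := by
  -- first for compact S T
  have key : ∀ K₁ K₂ : Set ℝ, IsCompact K₁ → IsCompact K₂ → K₁.Nonempty → K₂.Nonempty →
      K₁ ⊆ S → K₂ ⊆ T → volume K₁ + volume K₂ ≤ volume U := by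
    intro K₁ K₂ h1 h2 hne1 hne2 hsub1 hsub2
    set a := sSup K₁ with ha
    set b := sInf K₂ with hb
    have haK : a ∈ K₁ := h1.sSup_mem hne1
    have hbK : b ∈ K₂ := h2.sInf_mem hne2
    have hsub : (K₁ + {b}) ∪ ({a} + K₂) ⊆ U := by
      apply union_subset
      · exact fun x hx => hU (add_subset_add hsub1 (singleton_subset_iff.2 (hsub2 hbK)) hx)
      · exact fun x hx => hU (add_subset_add (singleton_subset_iff.2 (hsub1 haK)) hsub2 hx)
    have hmeas : volume ((K₁ + {b}) ∪ ({a} + K₂)) = volume K₁ + volume K₂ := by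
      have hK1b : K₁ + {b} = (· + b) '' K₁ := by
        simp [add_singleton]
      have haK2 : {a} + K₂ = (a + ·) '' K₂ := by
        simp [singleton_add]
      have hv1 : volume (K₁ + {b}) = volume K₁ := by
        rw [hK1b, Set.image_add_right]; exact measure_preimage_add_right _ _ _
      have hv2 : volume ({a} + K₂) = volume K₂ := by
        rw [haK2, Set.image_add_left]; exact measure_preimage_add _ _ _
      have hint : volume ((K₁ + {b}) ∩ ({a} + K₂)) = 0 := by
        have : (K₁ + {b}) ∩ ({a} + K₂) ⊆ {a + b} := by
          rintro x ⟨hx1, hx2⟩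
          rw [hK1b] at hx1; rw [haK2] at hx2
          obtain ⟨y, hy, rfl⟩ := hx1
          obtain ⟨z, hz, hz'⟩ := hx2
          have h1' : y ≤ a := le_csSup h1.bddAbove hy
          have h2' : b ≤ z := csInf_le h2.bddBelow hz
          have : y + b = a + z := hz'.symm
          have : y = a ∧ b = z := by constructor <;> linarith
          simp [this.1]
        exact measure_mono_null this (measure_singleton _)
      have hmu := measure_union_add_inter (μ := volume) (s := K₁ + {b}) (t := {a} + K₂)
        (((isCompact_singleton.add h2).measurableSet))
      rw [hint, add_zero] at hmu
      rw [hmu, hv1, hv2]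
    calc volume K₁ + volume K₂ = volume ((K₁ + {b}) ∪ ({a} + K₂)) := hmeas.symm
      _ ≤ volume U := measure_mono hsub
  -- inner regularity
  by_cases hfin : volume S ≠ ⊤ ∧ volume T ≠ ⊤
  · obtain ⟨hfS, hfT⟩ := hfin
    refine ENNReal.le_of_forall_pos_le_add fun ε hε _ => ?_
    have hε2 : (ε : ENNReal) / 2 ≠ 0 := by
      simp [ENNReal.div_eq_zero_iff, (by exact_mod_cast hε.ne' : (ε:ENNReal) ≠ 0)]
    obtain ⟨K₁, hK₁S, hK₁c, hK₁v⟩ := hS.exists_isCompact_lt_add (μ := volume) hfS hε2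
    obtain ⟨K₂, hK₂S, hK₂c, hK₂v⟩ := hT.exists_isCompact_lt_add (μ := volume) hfT hε2
    obtain ⟨s₀, hs₀⟩ := hSne
    obtain ⟨t₀, ht₀⟩ := hTne
    have h1 : volume S + volume T ≤ (volume (K₁ ∪ {s₀}) + ε/2) + (volume (K₂ ∪ {t₀}) + ε/2) := by
      gcongr
      · exact le_trans hK₁v.le (by gcongr; exact subset_union_left)
      · exact le_trans hK₂v.le (by gcongr; exact subset_union_left)
    have h2 := key (K₁ ∪ {s₀}) (K₂ ∪ {t₀}) (hK₁c.union isCompact_singleton)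
      (hK₂c.union isCompact_singleton) (by simp) (by simp)
      (union_subset hK₁S (by simpa)) (union_subset hK₂S (by simpa))
    calc volume S + volume T ≤ (volume (K₁ ∪ {s₀}) + volume (K₂ ∪ {t₀})) + (ε/2 + ε/2) := by
          exact h1.trans_eq (by ring)
      _ ≤ volume U + ε := by
          rw [ENNReal.add_halves]; exact add_le_add h2 le_rfl
  · -- one of them infinite: U contains a translate of it
    push_neg at hfin
    by_cases hfS : volume S = ⊤
    · obtain ⟨t₀, ht₀⟩ := hTne
      have : (· + t₀) '' S ⊆ U := fun x ⟨y, hy, hxy⟩ => hxy ▸ hU (add_mem_add hy ht₀)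
      have hv : volume ((· + t₀) '' S) = volume S := by
        rw [Set.image_add_right]; exact measure_preimage_add_right _ _ _
      have : volume U = ⊤ := top_unique <| by
        rw [← hfS, ← hv]; exact measure_mono this
      simp [this]
    · have hfT : volume T = ⊤ := hfin (by exact hfS)
      obtain ⟨s₀, hs₀⟩ := hSne
      have hsub : (s₀ + ·) '' T ⊆ U := fun x ⟨y, hy, hxy⟩ => hxy ▸ hU (add_mem_add hs₀ hy)
      have hv : volume ((s₀ + ·) '' T) = volume T := by
        rw [Set.image_add_left]; exact measure_preimage_add _ _ _
      have : volume U = ⊤ := top_unique <| by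
        rw [← hfT, ← hv]; exact measure_mono hsub
      simp [this]


lemma ennAMGM (x y : ℝ≥0∞) (a b : ℝ) (ha : 0 < a) (hb : 0 < b) (hab : a + b = 1) :
    x ^ a * y ^ b ≤ ENNReal.ofReal a * x + ENNReal.ofReal b * y := by
  rcases eq_or_ne x ⊤ with rfl | hx
  · rcases eq_or_ne y 0 with rfl | hy
    · rw [ENNReal.zero_rpow_of_pos hb, mul_zero]; exact zero_le
    · have htop : ENNReal.ofReal a * (⊤ : ℝ≥0∞) + ENNReal.ofReal b * y = ⊤ := by
        rw [ENNReal.mul_top (by simp only [ne_eq, ENNReal.ofReal_eq_zero, not_le]; linarith),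
          top_add]
      rw [htop]; exact le_top
  rcases eq_or_ne y ⊤ with rfl | hy
  · rcases eq_or_ne x 0 with rfl | hx0
    · rw [ENNReal.zero_rpow_of_pos ha, zero_mul]; exact zero_le
    · have htop : ENNReal.ofReal a * x + ENNReal.ofReal b * (⊤ : ℝ≥0∞) = ⊤ := by
        rw [ENNReal.mul_top (by simp only [ne_eq, ENNReal.ofReal_eq_zero, not_le]; linarith),
          add_top]
      rw [htop]; exact le_top
  lift x to NNReal using hx
  lift y to NNReal using hy
  have key := NNReal.geom_mean_le_arith_mean2_weighted (w₁ := a.toNNReal) (w₂ := b.toNNReal)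
    (p₁ := x) (p₂ := y) (by
      rw [← Real.toNNReal_add ha.le hb.le, hab, Real.toNNReal_one])
  have h1 : ((a.toNNReal : ℝ)) = a := Real.coe_toNNReal _ ha.le
  have h2 : ((b.toNNReal : ℝ)) = b := Real.coe_toNNReal _ hb.le
  rw [h1, h2] at key
  calc (x : ℝ≥0∞) ^ a * (y : ℝ≥0∞) ^ b = ((x ^ a * y ^ b : ℝ≥0) : ℝ≥0∞) := by
        rw [ENNReal.coe_mul, ENNReal.coe_rpow_of_nonneg _ ha.le,
          ENNReal.coe_rpow_of_nonneg _ hb.le]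
    _ ≤ ((a.toNNReal * x + b.toNNReal * y : ℝ≥0) : ℝ≥0∞) := by exact_mod_cast key
    _ = ENNReal.ofReal a * x + ENNReal.ofReal b * y := by
        simp [ENNReal.coe_add, ENNReal.coe_mul, ENNReal.ofReal]



lemma PL1_norm {l : ℝ} (hl0 : 0 < l) (hl1 : l < 1)
    {f g h : ℝ → ℝ} (hf : Measurable f) (hg : Measurable g) (hh : Measurable h)
    (hf0 : ∀ s, 0 ≤ f s) (hg0 : ∀ t, 0 ≤ g t) (hh0 : ∀ u, 0 ≤ h u)
    (hf1 : ∀ s, f s ≤ 1) (hg1 : ∀ t, g t ≤ 1)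
    (hfne : ∀ r : ℝ, 0 < r → r < 1 → {s | r < f s}.Nonempty)
    (hgne : ∀ r : ℝ, 0 < r → r < 1 → {t | r < g t}.Nonempty)
    (hyp : ∀ s t, f s ^ (1 - l) * g t ^ l ≤ h ((1 - l) * s + l * t)) :
    ENNReal.ofReal (1-l) * (∫⁻ s, ENNReal.ofReal (f s)) +
      ENNReal.ofReal l * (∫⁻ t, ENNReal.ofReal (g t)) ≤ ∫⁻ u, ENNReal.ofReal (h u) := by
  have hIf := lintegral_eq_lintegral_meas_lt volume (ae_of_all _ hf0) hf.aemeasurable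
  have hIg := lintegral_eq_lintegral_meas_lt volume (ae_of_all _ hg0) hg.aemeasurable
  have hIh := lintegral_eq_lintegral_meas_lt volume (ae_of_all _ hh0) hh.aemeasurable
  -- pointwise level-set inequality on (0,1)
  have level : ∀ r ∈ Ioo (0:ℝ) 1,
      ENNReal.ofReal (1-l) * volume {s | r < f s} + ENNReal.ofReal l * volume {t | r < g t}
        ≤ volume {u | r < h u} := by
    rintro r ⟨hr0, hr1⟩
    have hAm : MeasurableSet {s | r < f s} := measurableSet_lt measurable_const hf
    have hBm : MeasurableSet {t | r < g t} := measurableSet_lt measurable_const hg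
    have hAne := hfne r hr0 hr1
    have hBne := hgne r hr0 hr1
    have hsub : (1-l) • {s | r < f s} + l • {t | r < g t} ⊆ {u | r < h u} := by
      rintro x ⟨x1, ⟨s, hs, rfl⟩, x2, ⟨t, ht, rfl⟩, rfl⟩
      simp only [smul_eq_mul, mem_setOf_eq]
      have h1 : r ^ (1-l) < f s ^ (1-l) :=
        Real.rpow_lt_rpow hr0.le hs (by linarith)
      have h2 : r ^ l < g t ^ l := Real.rpow_lt_rpow hr0.le ht hl0
      have h3 : r ^ (1-l) * r ^ l < f s ^ (1-l) * g t ^ l :=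
        mul_lt_mul'' h1 h2 (Real.rpow_nonneg hr0.le _) (Real.rpow_nonneg hr0.le _)
      have h4 : r ^ (1-l) * r ^ l = r := by
        rw [← Real.rpow_add hr0]; simp
      calc r = r ^ (1-l) * r ^ l := h4.symm
        _ < f s ^ (1-l) * g t ^ l := h3
        _ ≤ h ((1-l) * s + l * t) := hyp s t
    have hbm := oneDimBM ((hAm.const_smul₀ (1-l)))
      ((hBm.const_smul₀ l)) (hAne.smul_set) (hBne.smul_set) hsub
    have hv1 : volume ((1-l) • {s | r < f s}) = ENNReal.ofReal (1-l) * volume {s | r < f s} := by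
      rw [Measure.addHaar_smul]
      congr 2
      simp [abs_of_nonneg (by linarith : (0:ℝ) ≤ 1 - l)]
    have hv2 : volume (l • {t | r < g t}) = ENNReal.ofReal l * volume {t | r < g t} := by
      rw [Measure.addHaar_smul]
      congr 2
      simp [abs_of_nonneg hl0.le]
    rw [hv1, hv2] at hbm
    exact hbm
  -- measurability of tail functions
  have hmF : Measurable fun r : ℝ => volume {s | r < f s} :=
    Antitone.measurable (fun r r' hrr' => measure_mono (fun s hs => lt_of_le_of_lt hrr' hs))
  have hmG : Measurable fun r : ℝ => volume {t | r < g t} :=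
    Antitone.measurable (fun r r' hrr' => measure_mono (fun s hs => lt_of_le_of_lt hrr' hs))
  -- tail functions vanish past 1
  have hFvanish : ∀ r : ℝ, 1 ≤ r → volume {s | r < f s} = 0 := fun r hr => by
    have : {s | r < f s} = ∅ :=
      eq_empty_iff_forall_notMem.2 fun s hs => absurd (lt_of_le_of_lt hr hs) (not_lt.2 (hf1 s))
    simp [this]
  have hGvanish : ∀ r : ℝ, 1 ≤ r → volume {t | r < g t} = 0 := fun r hr => by
    have : {t | r < g t} = ∅ :=
      eq_empty_iff_forall_notMem.2 fun t ht => absurd (lt_of_le_of_lt hr ht) (not_lt.2 (hg1 t))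
    simp [this]
  have hsplitF : ∫⁻ r in Ioi (0:ℝ), volume {s | r < f s} =
      ∫⁻ r in Ioo (0:ℝ) 1, volume {s | r < f s} := by
    rw [← Ioo_union_Ici_eq_Ioi (zero_lt_one)]
    rw [lintegral_union measurableSet_Ici ((Iio_disjoint_Ici le_rfl).mono_left Ioo_subset_Iio_self)]
    have : ∫⁻ r in Ici (1:ℝ), volume {s | r < f s} = 0 := by
      rw [setLIntegral_congr_fun measurableSet_Ici
        (fun r (hr : 1 ≤ r) => hFvanish r hr)]
      simp
    rw [this, add_zero]
  have hsplitG : ∫⁻ r in Ioi (0:ℝ), volume {t | r < g t} =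
      ∫⁻ r in Ioo (0:ℝ) 1, volume {t | r < g t} := by
    rw [← Ioo_union_Ici_eq_Ioi (zero_lt_one)]
    rw [lintegral_union measurableSet_Ici ((Iio_disjoint_Ici le_rfl).mono_left Ioo_subset_Iio_self)]
    have : ∫⁻ r in Ici (1:ℝ), volume {t | r < g t} = 0 := by
      rw [setLIntegral_congr_fun measurableSet_Ici
        (fun r (hr : 1 ≤ r) => hGvanish r hr)]
      simp
    rw [this, add_zero]
  rw [hIf, hIg, hIh, hsplitF, hsplitG]
  calc ENNReal.ofReal (1-l) * (∫⁻ r in Ioo (0:ℝ) 1, volume {s | r < f s}) +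
        ENNReal.ofReal l * (∫⁻ r in Ioo (0:ℝ) 1, volume {t | r < g t})
      = ∫⁻ r in Ioo (0:ℝ) 1, (ENNReal.ofReal (1-l) * volume {s | r < f s} +
          ENNReal.ofReal l * volume {t | r < g t}) := by
        rw [lintegral_add_left (hmF.const_mul _), lintegral_const_mul _ hmF,
          lintegral_const_mul _ hmG]
    _ ≤ ∫⁻ r in Ioo (0:ℝ) 1, volume {u | r < h u} :=
        setLIntegral_mono' measurableSet_Ioo (fun r hr => level r hr)
    _ ≤ ∫⁻ r in Ioi (0:ℝ), volume {u | r < h u} :=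
        lintegral_mono_set Ioo_subset_Ioi_self




lemma PL1 {l : ℝ} (hl0 : 0 < l) (hl1 : l < 1)
    {f g h : ℝ → ℝ} (hf : Measurable f) (hg : Measurable g) (hh : Measurable h)
    (hf0 : ∀ s, 0 ≤ f s) (hg0 : ∀ t, 0 ≤ g t) (hh0 : ∀ u, 0 ≤ h u)
    (hfB : BddAbove (range f)) (hgB : BddAbove (range g))
    (hyp : ∀ s t, f s ^ (1 - l) * g t ^ l ≤ h ((1 - l) * s + l * t)) :
    (∫⁻ s, ENNReal.ofReal (f s)) ^ (1-l) * (∫⁻ t, ENNReal.ofReal (g t)) ^ l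
      ≤ ∫⁻ u, ENNReal.ofReal (h u) := by
  by_cases hIf : (∫⁻ s, ENNReal.ofReal (f s)) = 0
  · rw [hIf, ENNReal.zero_rpow_of_pos (by linarith), zero_mul]; exact zero_le
  by_cases hIg : (∫⁻ t, ENNReal.ofReal (g t)) = 0
  · rw [hIg, ENNReal.zero_rpow_of_pos hl0, mul_zero]; exact zero_le
  -- suprema are positive
  set Mf := sSup (range f) with hMfdef
  set Mg := sSup (range g) with hMgdef
  have hfle : ∀ s, f s ≤ Mf := fun s => le_csSup hfB ⟨s, rfl⟩
  have hgle : ∀ t, g t ≤ Mg := fun t => le_csSup hgB ⟨t, rfl⟩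
  have hMf : 0 < Mf := by
    by_contra hc
    push_neg at hc
    have : ∀ s, f s = 0 := fun s => le_antisymm ((hfle s).trans hc) (hf0 s)
    exact hIf (by simp [this])
  have hMg : 0 < Mg := by
    by_contra hc
    push_neg at hc
    have : ∀ t, g t = 0 := fun t => le_antisymm ((hgle t).trans hc) (hg0 t)
    exact hIg (by simp [this])
  set C := Mf ^ (1-l) * Mg ^ l with hCdef
  have hC : 0 < C := mul_pos (Real.rpow_pos_of_pos hMf _) (Real.rpow_pos_of_pos hMg _)
  set F := fun s => f s / Mf with hFdef
  set G := fun t => g t / Mg with hGdef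
  set H := fun u => h u / C with hHdef
  have key := PL1_norm hl0 hl1 (hf.div_const Mf) (hg.div_const Mg) (hh.div_const C)
    (fun s => div_nonneg (hf0 s) hMf.le) (fun t => div_nonneg (hg0 t) hMg.le)
    (fun u => div_nonneg (hh0 u) hC.le)
    (fun s => div_le_one_of_le₀ (hfle s) hMf.le)
    (fun t => div_le_one_of_le₀ (hgle t) hMg.le)
    (fun r hr0 hr1 => by
      obtain ⟨_, ⟨s, rfl⟩, hs⟩ := exists_lt_of_lt_csSup (range_nonempty f)
        (show r * Mf < Mf from mul_lt_of_lt_one_left hMf hr1)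
      exact ⟨s, (lt_div_iff₀ hMf).2 hs⟩)
    (fun r hr0 hr1 => by
      obtain ⟨_, ⟨t, rfl⟩, ht⟩ := exists_lt_of_lt_csSup (range_nonempty g)
        (show r * Mg < Mg from mul_lt_of_lt_one_left hMg hr1)
      exact ⟨t, (lt_div_iff₀ hMg).2 ht⟩)
    (fun s t => by
      show (f s / Mf) ^ (1-l) * (g t / Mg) ^ l ≤ h ((1-l)*s + l*t) / C
      rw [Real.div_rpow (hf0 s) hMf.le, Real.div_rpow (hg0 t) hMg.le, div_mul_div_comm]
      gcongr
      exact hyp s t)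
  set cf := ENNReal.ofReal Mf with hcf
  set cg := ENNReal.ofReal Mg with hcg
  set cC := ENNReal.ofReal C with hcC
  have hcf0 : cf ≠ 0 := by simp only [hcf, ne_eq, ENNReal.ofReal_eq_zero, not_le]; linarith
  have hcg0 : cg ≠ 0 := by simp only [hcg, ne_eq, ENNReal.ofReal_eq_zero, not_le]; linarith
  have hcC0 : cC ≠ 0 := by simp only [hcC, ne_eq, ENNReal.ofReal_eq_zero, not_le]; linarith
  have hdiv : ∀ (φ : ℝ → ℝ) (M : ℝ), 0 < M → (∀ x, 0 ≤ φ x) →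
      (∫⁻ x, ENNReal.ofReal (φ x / M)) = (∫⁻ x, ENNReal.ofReal (φ x)) / ENNReal.ofReal M := by
    intro φ M hM hφ
    simp_rw [div_eq_mul_inv, ENNReal.ofReal_mul (hφ _)]
    rw [lintegral_mul_const' _ _ (by simp), ENNReal.ofReal_inv_of_pos hM]
  rw [hdiv f Mf hMf hf0, hdiv g Mg hMg hg0, hdiv h C hC hh0] at key
  set If := ∫⁻ s, ENNReal.ofReal (f s)
  set Ig := ∫⁻ t, ENNReal.ofReal (g t)
  set Ih := ∫⁻ u, ENNReal.ofReal (h u)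
  have hamgm := ennAMGM (If / cf) (Ig / cg) (1-l) l (by linarith) hl0 (by ring)
  have hchain : (If / cf) ^ (1-l) * (Ig / cg) ^ l ≤ Ih / cC := hamgm.trans key
  have hcCfactor : cC = cf ^ (1-l) * cg ^ l := by
    rw [hcC, hCdef, ENNReal.ofReal_mul (Real.rpow_nonneg hMf.le _),
      ENNReal.ofReal_rpow_of_pos hMf, ENNReal.ofReal_rpow_of_pos hMg]
  have h1 : cf ^ (1-l) ≠ 0 := by
    simp only [ne_eq, ENNReal.rpow_eq_zero_iff, not_or, not_and]
    exact ⟨fun hc => absurd hc hcf0, fun hc => absurd hc ENNReal.ofReal_ne_top⟩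
  have h1t : cf ^ (1-l) ≠ ⊤ := by
    simp only [ne_eq, ENNReal.rpow_eq_top_iff, not_or, not_and]
    exact ⟨fun hc => absurd hc hcf0, fun hc => absurd hc ENNReal.ofReal_ne_top⟩
  have hLHS : (If / cf) ^ (1-l) * (Ig / cg) ^ l = (If ^ (1-l) * Ig ^ l) / cC := by
    rw [ENNReal.div_rpow_of_nonneg _ _ (by linarith : (0:ℝ) ≤ 1-l),
      ENNReal.div_rpow_of_nonneg _ _ hl0.le, hcCfactor, div_eq_mul_inv, div_eq_mul_inv,
      div_eq_mul_inv, ENNReal.mul_inv (Or.inl h1) (Or.inl h1t)]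
    ring
  rw [hLHS] at hchain
  calc If ^ (1-l) * Ig ^ l = cC * ((If ^ (1-l) * Ig ^ l) / cC) :=
        (ENNReal.mul_div_cancel hcC0 ENNReal.ofReal_ne_top).symm
    _ ≤ cC * (Ih / cC) := by gcongr
    _ = Ih := ENNReal.mul_div_cancel hcC0 ENNReal.ofReal_ne_top



variable (E : Type*) [NormedAddCommGroup E] [NormedSpace ℝ E] [MeasureSpace E]

/-- multiplicative Brunn–Minkowski statement for a space. -/
def BMstmt (l : ℝ) : Prop :=
  ∀ K L : Set E, IsCompact K → Convex ℝ K → K.Nonempty →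
    IsCompact L → Convex ℝ L → L.Nonempty →
    (volume K) ^ (1-l) * (volume L) ^ l ≤ volume ((1-l) • K + l • L)

variable {E}

lemma BMstep [BorelSpace E] [SecondCountableTopology E]
    [SFinite (volume : Measure E)] [IsFiniteMeasureOnCompacts (volume : Measure E)]
    {l : ℝ} (hl0 : 0 < l) (hl1 : l < 1) (hE : BMstmt E l) : BMstmt (ℝ × E) l := by
  intro K L hK hKc hKne hL hLc hLne
  set C := (1-l) • K + l • L with hCdef
  have hC : IsCompact C := (hK.smul _).add (hL.smul _)
  -- slice functions
  have hKm := hK.measurableSet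
  have hLm := hL.measurableSet
  have hCm := hC.measurableSet
  set f : ℝ → ℝ := fun s => (volume (Prod.mk s ⁻¹' K)).toReal with hfdef
  set g : ℝ → ℝ := fun t => (volume (Prod.mk t ⁻¹' L)).toReal with hgdef
  set h : ℝ → ℝ := fun u => (volume (Prod.mk u ⁻¹' C)).toReal with hhdef
  -- slices have finite volume
  have hslice_fin : ∀ (S : Set (ℝ × E)), IsCompact S → ∀ s,
      volume (Prod.mk s ⁻¹' S) ≤ volume (Prod.snd '' S) ∧ volume (Prod.snd '' S) ≠ ⊤ := by
    intro S hS s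
    constructor
    · exact measure_mono (fun x hx => ⟨(s, x), hx, rfl⟩)
    · exact (hS.image continuous_snd).measure_lt_top.ne
  have hKfin : ∀ s, volume (Prod.mk s ⁻¹' K) ≠ ⊤ :=
    fun s => ((hslice_fin K hK s).1.trans_lt (lt_top_iff_ne_top.2 (hslice_fin K hK s).2)).ne
  have hLfin : ∀ t, volume (Prod.mk t ⁻¹' L) ≠ ⊤ :=
    fun t => ((hslice_fin L hL t).1.trans_lt (lt_top_iff_ne_top.2 (hslice_fin L hL t).2)).ne
  have hCfin : ∀ u, volume (Prod.mk u ⁻¹' C) ≠ ⊤ :=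
    fun u => ((hslice_fin C hC u).1.trans_lt (lt_top_iff_ne_top.2 (hslice_fin C hC u).2)).ne
  -- measurability
  have hfm : Measurable f := ENNReal.measurable_toReal.comp (measurable_measure_prodMk_left hKm)
  have hgm : Measurable g := ENNReal.measurable_toReal.comp (measurable_measure_prodMk_left hLm)
  have hhm : Measurable h := ENNReal.measurable_toReal.comp (measurable_measure_prodMk_left hCm)
  -- boundedness
  have hfB : BddAbove (range f) := by
    refine ⟨(volume (Prod.snd '' K)).toReal, ?_⟩
    rintro x ⟨s, rfl⟩
    exact ENNReal.toReal_mono (hslice_fin K hK s).2 (hslice_fin K hK s).1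
  have hgB : BddAbove (range g) := by
    refine ⟨(volume (Prod.snd '' L)).toReal, ?_⟩
    rintro x ⟨t, rfl⟩
    exact ENNReal.toReal_mono (hslice_fin L hL t).2 (hslice_fin L hL t).1
  -- slices are compact and convex
  have hslice_compact : ∀ (S : Set (ℝ × E)), IsCompact S → ∀ s, IsCompact (Prod.mk s ⁻¹' S) := by
    intro S hS s
    refine IsCompact.of_isClosed_subset (hS.image continuous_snd)
      (hS.isClosed.preimage (Continuous.prodMk_right s)) (fun x hx => ⟨(s, x), hx, rfl⟩)
  have hslice_convex : ∀ (S : Set (ℝ × E)), Convex ℝ S → ∀ s, Convex ℝ (Prod.mk s ⁻¹' S) := by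
    intro S hS s x hx y hy a b ha hb hab
    have := hS hx hy ha hb hab
    simpa [Prod.smul_mk, Prod.mk_add_mk, ← add_mul, hab] using this
  -- key hypothesis
  have hyp : ∀ s t, f s ^ (1-l) * g t ^ l ≤ h ((1-l) * s + l * t) := by
    intro s t
    rcases eq_empty_or_nonempty (Prod.mk s ⁻¹' K) with hKe | hKsne
    · simp only [hfdef, hKe, measure_empty, ENNReal.toReal_zero]
      rw [Real.zero_rpow (by linarith : (1:ℝ) - l ≠ 0), zero_mul]
      exact ENNReal.toReal_nonneg
    rcases eq_empty_or_nonempty (Prod.mk t ⁻¹' L) with hLe | hLtne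
    · simp only [hgdef, hLe, measure_empty, ENNReal.toReal_zero]
      rw [Real.zero_rpow (by linarith : l ≠ 0), mul_zero]
      exact ENNReal.toReal_nonneg
    have hsub : (1-l) • (Prod.mk s ⁻¹' K) + l • (Prod.mk t ⁻¹' L) ⊆
        Prod.mk ((1-l) * s + l * t) ⁻¹' C := by
      rintro x ⟨x1, ⟨u, hu, rfl⟩, x2, ⟨v, hv, rfl⟩, rfl⟩
      show ((1-l) * s + l * t, (1-l) • u + l • v) ∈ C
      have : ((1-l) * s + l * t, (1-l) • u + l • v) = (1-l) • (s, u) + l • (t, v) := by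
        simp [Prod.smul_mk, Prod.mk_add_mk, smul_eq_mul]
      rw [this]
      exact add_mem_add (smul_mem_smul_set hu) (smul_mem_smul_set hv)
    have hIH := hE (Prod.mk s ⁻¹' K) (Prod.mk t ⁻¹' L) (hslice_compact K hK s)
      (hslice_convex K hKc s) hKsne (hslice_compact L hL t) (hslice_convex L hLc t) hLtne
    have : (volume (Prod.mk s ⁻¹' K)) ^ (1-l) * (volume (Prod.mk t ⁻¹' L)) ^ l ≤
        volume (Prod.mk ((1-l) * s + l * t) ⁻¹' C) :=
      hIH.trans (measure_mono hsub)
    have hrw : f s ^ (1-l) * g t ^ l =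
        ((volume (Prod.mk s ⁻¹' K)) ^ (1-l) * (volume (Prod.mk t ⁻¹' L)) ^ l).toReal := by
      rw [ENNReal.toReal_mul, ← ENNReal.toReal_rpow, ← ENNReal.toReal_rpow]
    rw [hrw]
    exact ENNReal.toReal_mono (hCfin _) this
  have key := PL1 hl0 hl1 hfm hgm hhm (fun _ => ENNReal.toReal_nonneg)
    (fun _ => ENNReal.toReal_nonneg) (fun _ => ENNReal.toReal_nonneg) hfB hgB hyp
  -- identify integrals with volumes
  have hvol : ∀ (S : Set (ℝ × E)), MeasurableSet S → (∀ u, volume (Prod.mk u ⁻¹' S) ≠ ⊤) →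
      (∫⁻ u, ENNReal.ofReal ((volume (Prod.mk u ⁻¹' S)).toReal)) = volume S := by
    intro S hSm hSfin
    have : ∀ u, ENNReal.ofReal ((volume (Prod.mk u ⁻¹' S)).toReal) = volume (Prod.mk u ⁻¹' S) :=
      fun u => ENNReal.ofReal_toReal (hSfin u)
    simp_rw [this]
    rw [Measure.volume_eq_prod ℝ E, Measure.prod_apply hSm]
  rw [hfdef, hgdef, hhdef] at key
  simp only at key
  rw [hvol K hKm hKfin, hvol L hLm hLfin, hvol C hCm hCfin] at key
  exact key




lemma BMtransfer {F : Type*} [NormedAddCommGroup F] [NormedSpace ℝ F] [MeasureSpace F]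
    [BorelSpace E] [BorelSpace F]
    (e : E ≃ₗ[ℝ] F) (he : MeasurePreserving e volume volume)
    (hec : Continuous e) {l : ℝ} (hF : BMstmt F l) : BMstmt E l := by
  intro K L hK hKc hKne hL hLc hLne
  have himK : IsCompact (e '' K) := hK.image hec
  have himL : IsCompact (e '' L) := hL.image hec
  have key := hF (e '' K) (e '' L) himK (hKc.linear_image e.toLinearMap) (hKne.image _)
    himL (hLc.linear_image e.toLinearMap) (hLne.image _)
  have hcomb : (1-l) • (⇑e '' K) + l • (⇑e '' L) = ⇑e '' ((1-l) • K + l • L) := by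
    rw [Set.image_add e, image_smul_set e, image_smul_set e]
  have hvol : ∀ (X : Set E), MeasurableSet (e '' X) → volume (e '' X) = volume X := by
    intro X hX
    rw [← he.measure_preimage hX.nullMeasurableSet, Set.preimage_image_eq X e.injective]
  rw [hcomb] at key
  have hCm : IsCompact ((1-l) • K + l • L) := (hK.smul _).add (hL.smul _)
  rw [hvol K himK.measurableSet, hvol L himL.measurableSet,
    hvol _ ((hCm.image hec).measurableSet)] at key
  exact key

noncomputable def finSuccLE (n : ℕ) : (Fin (n+1) → ℝ) ≃ₗ[ℝ] ℝ × (Fin n → ℝ) where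
  toFun f := (f 0, fun i => f i.succ)
  invFun p := Fin.cons p.1 p.2
  map_add' := by intros; ext <;> simp
  map_smul' := by intros; ext <;> simp
  left_inv f := by
    ext i
    refine Fin.cases ?_ (fun j => ?_) i
    · simp
    · simp
  right_inv p := by
    ext i <;> simp

lemma finSuccLE_continuous (n : ℕ) : Continuous (finSuccLE n) := by
  exact Continuous.prodMk (continuous_apply 0) (continuous_pi fun i => continuous_apply _)

lemma finSuccLE_measurePreserving (n : ℕ) :
    MeasurePreserving (finSuccLE n) volume volume := by
  have h := volume_preserving_piFinSuccAbove (fun _ : Fin (n+1) => ℝ) 0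
  have : ⇑(finSuccLE n) = ⇑(MeasurableEquiv.piFinSuccAbove (fun _ : Fin (n+1) => ℝ) 0) := by
    funext f
    show (f 0, fun i => f i.succ) = (f 0, fun i => f (Fin.succAbove 0 i))
    simp [Fin.succAbove_zero]
  rw [this]
  exact h

lemma BMfin {l : ℝ} (hl0 : 0 < l) (hl1 : l < 1) (n : ℕ) : BMstmt (Fin n → ℝ) l := by
  induction n with
  | zero =>
      intro K L hK hKc hKne hL hLc hLne
      have hKu : K = univ := hKne.eq_univ
      have hCne : ((1-l) • K + l • L).Nonempty := (hKne.smul_set).add (hLne.smul_set)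
      have hCu : (1-l) • K + l • L = univ := hCne.eq_univ
      have hLu : L = univ := hLne.eq_univ
      have huniv : volume (univ : Set (Fin 0 → ℝ)) = 1 := by
        rw [volume_pi, Measure.pi_univ]
        simp
      rw [hCu, hKu, hLu, huniv, ENNReal.one_rpow, ENNReal.one_rpow, one_mul]
  | succ n ih =>
      exact BMtransfer (finSuccLE n) (finSuccLE_measurePreserving n)
        (finSuccLE_continuous n) (BMstep hl0 hl1 ih)




lemma vol_smul {n : ℕ} (c : ℝ) (hc : 0 ≤ c) (S : Set (Fin n → ℝ)) :
    volume (c • S) = ENNReal.ofReal (c ^ n) * volume S := by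
  rw [Measure.addHaar_smul]
  congr 2
  rw [Module.finrank_fin_fun, abs_of_nonneg (by positivity)]

/-- Additive Brunn–Minkowski for compact convex subsets of `Fin n → ℝ`. -/
lemma BMadd {n : ℕ} (hn : 0 < n) {K L : Set (Fin n → ℝ)} (hK : IsCompact K) (hKc : Convex ℝ K)
    (hKne : K.Nonempty) (hL : IsCompact L) (hLc : Convex ℝ L) (hLne : L.Nonempty)
    {a b : ℝ} (ha : 0 ≤ a) (hb : 0 ≤ b) (hab : a + b = 1) :
    ENNReal.ofReal ((a * (volume K).toReal ^ ((1:ℝ)/n)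
        + b * (volume L).toReal ^ ((1:ℝ)/n)) ^ (n:ℕ))
      ≤ volume (a • K + b • L) := by
  have hnR : (0:ℝ) < n := by exact_mod_cast hn
  set α := (volume K).toReal ^ ((1:ℝ)/n) with hα
  set β := (volume L).toReal ^ ((1:ℝ)/n) with hβ
  have hα0 : 0 ≤ α := Real.rpow_nonneg ENNReal.toReal_nonneg _
  have hβ0 : 0 ≤ β := Real.rpow_nonneg ENNReal.toReal_nonneg _
  have hKfin : volume K ≠ ⊤ := hK.measure_lt_top.ne
  have hLfin : volume L ≠ ⊤ := hL.measure_lt_top.ne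
  have hαpow : α ^ (n:ℕ) = (volume K).toReal := by
    rw [hα, ← Real.rpow_natCast (_ ^ _) n, ← Real.rpow_mul ENNReal.toReal_nonneg,
      one_div_mul_cancel hnR.ne', Real.rpow_one]
  have hβpow : β ^ (n:ℕ) = (volume L).toReal := by
    rw [hβ, ← Real.rpow_natCast (_ ^ _) n, ← Real.rpow_mul ENNReal.toReal_nonneg,
      one_div_mul_cancel hnR.ne', Real.rpow_one]
  rcases eq_or_lt_of_le ha with rfl | ha'
  · -- a = 0, b = 1
    have hb1 : b = 1 := by linarith
    subst hb1
    rw [zero_smul_set hKne, zero_add, one_smul, zero_mul, zero_add, one_mul, hβpow,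
      ENNReal.ofReal_toReal hLfin]
  rcases eq_or_lt_of_le hb with rfl | hb'
  · have ha1 : a = 1 := by linarith
    subst ha1
    rw [zero_smul_set hLne, add_zero, one_smul, zero_mul, add_zero, one_mul, hαpow,
      ENNReal.ofReal_toReal hKfin]
  -- both a b > 0
  rcases eq_or_ne (volume K) 0 with hK0 | hK0
  · have hαz : α = 0 := by
      rw [hα, hK0, ENNReal.toReal_zero, Real.zero_rpow (by positivity : (1:ℝ)/n ≠ 0)]
    obtain ⟨x₀, hx₀⟩ := hKne.smul_set (a := a)
    have hsub : (fun y => x₀ + y) '' (b • L) ⊆ a • K + b • L :=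
      fun y ⟨z, hz, hyz⟩ => hyz ▸ add_mem_add hx₀ hz
    calc ENNReal.ofReal ((a * α + b * β) ^ (n:ℕ))
        = volume (b • L) := by
          rw [vol_smul b hb, hαz, mul_zero, zero_add, mul_pow, hβpow,
            ENNReal.ofReal_mul (by positivity), ENNReal.ofReal_toReal hLfin]
      _ = volume ((fun y => x₀ + y) '' (b • L)) := by
          rw [Set.image_add_left]; exact (measure_preimage_add _ _ _).symm
      _ ≤ volume (a • K + b • L) := measure_mono hsub
  rcases eq_or_ne (volume L) 0 with hL0 | hL0
  · have hβz : β = 0 := by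
      rw [hβ, hL0, ENNReal.toReal_zero, Real.zero_rpow (by positivity : (1:ℝ)/n ≠ 0)]
    obtain ⟨y₀, hy₀⟩ := hLne.smul_set (a := b)
    have hsub : (fun y => y + y₀) '' (a • K) ⊆ a • K + b • L :=
      fun y ⟨z, hz, hyz⟩ => hyz ▸ add_mem_add hz hy₀
    calc ENNReal.ofReal ((a * α + b * β) ^ (n:ℕ))
        = volume (a • K) := by
          rw [vol_smul a ha, hβz, mul_zero, add_zero, mul_pow, hαpow,
            ENNReal.ofReal_mul (by positivity), ENNReal.ofReal_toReal hKfin]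
      _ = volume ((fun y => y + y₀) '' (a • K)) := by
          rw [Set.image_add_right]; exact (measure_preimage_add_right _ _ _).symm
      _ ≤ volume (a • K + b • L) := measure_mono hsub
  -- main case
  have hαpos : 0 < α := Real.rpow_pos_of_pos
    (ENNReal.toReal_pos hK0 hKfin) _
  have hβpos : 0 < β := Real.rpow_pos_of_pos
    (ENNReal.toReal_pos hL0 hLfin) _
  set s := a * α + b * β with hs
  have hspos : 0 < s := by positivity
  set θ := b * β / s with hθ
  have hθ0 : 0 < θ := by positivity
  have hθ1 : θ < 1 := by
    rw [hθ, div_lt_one hspos]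
    nlinarith
  have h1θ : 1 - θ = a * α / s := by
    rw [hθ]; field_simp; rw [hs]; ring
  have hX : (1 - θ) • ((s/α) • K) = a • K := by
    rw [smul_smul, h1θ]
    congr 1
    field_simp
  have hY : θ • ((s/β) • L) = b • L := by
    rw [smul_smul, hθ]
    congr 1
    field_simp
  have hvolX : volume ((s/α) • K) = ENNReal.ofReal (s ^ (n:ℕ)) := by
    rw [vol_smul _ (by positivity), ← ENNReal.ofReal_toReal hKfin, ← hαpow,
      ← ENNReal.ofReal_mul (by positivity), div_pow, div_mul_cancel₀]
    positivity
  have hvolY : volume ((s/β) • L) = ENNReal.ofReal (s ^ (n:ℕ)) := by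
    rw [vol_smul _ (by positivity), ← ENNReal.ofReal_toReal hLfin, ← hβpow,
      ← ENNReal.ofReal_mul (by positivity), div_pow, div_mul_cancel₀]
    positivity
  have key := BMfin hθ0 hθ1 n ((s/α) • K) ((s/β) • L)
    (hK.smul _) (hKc.smul _) (hKne.smul_set) (hL.smul _) (hLc.smul _) (hLne.smul_set)
  rw [hX, hY, hvolX, hvolY, ← ENNReal.rpow_add _ _ (by simp [ENNReal.ofReal_eq_zero]; positivity)
    ENNReal.ofReal_ne_top] at key
  rw [sub_add_cancel, ENNReal.rpow_one] at key
  exact key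



theorem brunn_minkowski_slices_power_concave (n : ℕ) (hn : 0 < n)
    (𝒜 : Set (ℝ × (Fin n → ℝ)))
    (hc : IsCompact 𝒜) (hconv : Convex ℝ 𝒜) (hi : (interior 𝒜).Nonempty) :
    ConcaveOn ℝ {t : ℝ | {a : Fin n → ℝ | (t, a) ∈ 𝒜}.Nonempty}
      (fun t : ℝ => (volume {a : Fin n → ℝ | (t, a) ∈ 𝒜}).toReal ^ ((1:ℝ) / n)) := by
  have hnR : (0:ℝ) < n := by exact_mod_cast hn
  set S := {t : ℝ | {a : Fin n → ℝ | (t, a) ∈ 𝒜}.Nonempty} with hS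
  have slice_eq : ∀ t : ℝ, {a : Fin n → ℝ | (t, a) ∈ 𝒜} = Prod.mk t ⁻¹' 𝒜 := fun t => rfl
  have slice_compact : ∀ t : ℝ, IsCompact {a : Fin n → ℝ | (t, a) ∈ 𝒜} := by
    intro t
    rw [slice_eq]
    exact IsCompact.of_isClosed_subset (hc.image continuous_snd)
      (hc.isClosed.preimage (Continuous.prodMk_right t)) (fun x hx => ⟨(t, x), hx, rfl⟩)
  have slice_convex : ∀ t : ℝ, Convex ℝ {a : Fin n → ℝ | (t, a) ∈ 𝒜} := by
    intro t x hx y hy a b ha hb hab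
    have := hconv hx hy ha hb hab
    simpa [Prod.smul_mk, Prod.mk_add_mk, ← add_mul, hab] using this
  have slice_fin : ∀ t : ℝ, volume {a : Fin n → ℝ | (t, a) ∈ 𝒜} ≠ ⊤ := fun t =>
    ((slice_compact t).measure_lt_top).ne
  constructor
  · -- convexity of S
    intro x hx y hy a b ha hb hab
    obtain ⟨p, hp⟩ := hx
    obtain ⟨q, hq⟩ := hy
    refine ⟨a • p + b • q, ?_⟩
    have := hconv hp hq ha hb hab
    simpa [Prod.smul_mk, Prod.mk_add_mk] using this
  · intro x hx y hy a b ha hb hab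
    simp only [smul_eq_mul]
    set Ax := {p : Fin n → ℝ | (x, p) ∈ 𝒜} with hAx
    set Ay := {p : Fin n → ℝ | (y, p) ∈ 𝒜} with hAy
    set Az := {p : Fin n → ℝ | (a * x + b * y, p) ∈ 𝒜} with hAz
    have hsub : a • Ax + b • Ay ⊆ Az := by
      rintro p ⟨p1, ⟨u, hu, rfl⟩, p2, ⟨v, hv, rfl⟩, rfl⟩
      show (a * x + b * y, a • u + b • v) ∈ 𝒜
      have heq : (a * x + b * y, a • u + b • v) = a • (x, u) + b • (y, v) := by
        simp [Prod.smul_mk, Prod.mk_add_mk, smul_eq_mul]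
      rw [heq]
      exact hconv hu hv ha hb hab
    have hbm := BMadd hn (slice_compact x) (slice_convex x) hx
      (slice_compact y) (slice_convex y) hy ha hb hab
    have hchain : ENNReal.ofReal ((a * (volume Ax).toReal ^ ((1:ℝ)/n)
        + b * (volume Ay).toReal ^ ((1:ℝ)/n)) ^ (n:ℕ)) ≤ volume Az :=
      hbm.trans (measure_mono hsub)
    set c : ℝ := a * (volume Ax).toReal ^ ((1:ℝ)/n) + b * (volume Ay).toReal ^ ((1:ℝ)/n)
      with hcdef
    have hc0 : 0 ≤ c := by positivity
    have hreal : c ^ (n:ℕ) ≤ (volume Az).toReal := by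
      have := ENNReal.toReal_mono (slice_fin _) hchain
      rwa [ENNReal.toReal_ofReal (by positivity)] at this
    have hroot : (c ^ (n:ℕ)) ^ ((1:ℝ)/n) ≤ (volume Az).toReal ^ ((1:ℝ)/n) :=
      Real.rpow_le_rpow (by positivity) hreal (by positivity)
    have hcn : (c ^ (n:ℕ)) ^ ((1:ℝ)/n) = c := by
      rw [← Real.rpow_natCast c n, ← Real.rpow_mul hc0, mul_one_div_cancel hnR.ne',
        Real.rpow_one]
    rw [hcn] at hroot
    exact hroot
end

section
/- Prékopa's theorem implies the multiplicative Brunn–Minkowski theorem: if 𝒜 ⊆ ℝ^(n+1) is a convex body with slices A_t, then t ↦ log vol(A_t) is concave on the interval where A_t has positive volume. (Obtained by applying Prékopa to the convex function equal to 0 on 𝒜 and +∞ off 𝒜, or to a suitable limit of finite convex functions.) -/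
open MeasureTheory Metric Filter Topology Set Pointwise
open scoped ENNReal

lemma convexOn_infDist' {E : Type*} [NormedAddCommGroup E] [NormedSpace ℝ E]
    {s : Set E} (hne : s.Nonempty) (hs : Convex ℝ s) :
    ConvexOn ℝ Set.univ (fun p => infDist p s) := by
  refine ⟨convex_univ, fun a _ b _ la mu hla hmu hsum => ?_⟩
  refine le_of_forall_pos_le_add fun ε hε => ?_
  obtain ⟨y, hy, hay⟩ := (infDist_lt_iff hne).1
    (lt_add_of_pos_right (infDist a s) (half_pos hε))
  obtain ⟨z, hz, hbz⟩ := (infDist_lt_iff hne).1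
    (lt_add_of_pos_right (infDist b s) (half_pos hε))
  have hmem : la • y + mu • z ∈ s := hs hy hz hla hmu hsum
  have h1 : infDist (la • a + mu • b) s ≤ dist (la • a + mu • b) (la • y + mu • z) :=
    infDist_le_dist_of_mem hmem
  have h2 : dist (la • a + mu • b) (la • y + mu • z) ≤ la * dist a y + mu * dist b z := by
    rw [dist_eq_norm, dist_eq_norm, dist_eq_norm]
    have : la • a + mu • b - (la • y + mu • z) = la • (a - y) + mu • (b - z) := by
      simp [smul_sub]; abel
    rw [this]
    calc ‖la • (a - y) + mu • (b - z)‖ ≤ ‖la • (a - y)‖ + ‖mu • (b - z)‖ := norm_add_le _ _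
    _ = la * ‖a - y‖ + mu * ‖b - z‖ := by
        rw [norm_smul, norm_smul, Real.norm_eq_abs, Real.norm_eq_abs,
          abs_of_nonneg hla, abs_of_nonneg hmu]
  have h3 := h1.trans h2
  simp only [smul_eq_mul]
  have h4 : la * dist a y ≤ la * (infDist a s + ε / 2) :=
    mul_le_mul_of_nonneg_left hay.le hla
  have h5 : mu * dist b z ≤ mu * (infDist b s + ε / 2) :=
    mul_le_mul_of_nonneg_left hbz.le hmu
  nlinarith [hε]

lemma integrable_exp_neg_abs' {c : ℝ} (hc : 0 < c) :
    Integrable (fun x : ℝ => Real.exp (-(c * |x|))) := by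
  have h1 : IntegrableOn (fun x : ℝ => Real.exp (-(c * |x|))) (Set.Ioi 0) := by
    refine (exp_neg_integrableOn_Ioi 0 hc).congr_fun (fun x hx => ?_) measurableSet_Ioi
    rw [abs_of_pos hx]; ring_nf
  have h2 : IntegrableOn (fun x : ℝ => Real.exp (-(c * |x|))) (Set.Iic 0) := by
    rw [← Measure.map_neg_eq_self (volume : Measure ℝ)]
    have m : MeasurableEmbedding fun x : ℝ => -x := (Homeomorph.neg ℝ).measurableEmbedding
    rw [m.integrableOn_map_iff]
    simp only [Function.comp_def, abs_neg]
    have : (fun x : ℝ => -x) ⁻¹' Set.Iic 0 = Set.Ici 0 := by ext x; simp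
    rw [this]
    exact Iff.mpr integrableOn_Ici_iff_integrableOn_Ioi h1
  have := h2.union h1
  rwa [Set.Iic_union_Ioi, integrableOn_univ] at this

/-- Prékopa's theorem implies the multiplicative Brunn–Minkowski theorem. -/
theorem prekopa_implies_multiplicative_BM (n : ℕ)
    (prekopa : ∀ φ : ℝ × (Fin n → ℝ) → ℝ, ConvexOn ℝ Set.univ φ →
      (∀ t : ℝ, Integrable (fun x : Fin n → ℝ => Real.exp (-φ (t, x)))) →
      ConvexOn ℝ Set.univ
        (fun t : ℝ => -Real.log (∫ x : Fin n → ℝ, Real.exp (-φ (t, x))))) :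
    ∀ 𝒜 : Set (ℝ × (Fin n → ℝ)), IsCompact 𝒜 → Convex ℝ 𝒜 →
      (interior 𝒜).Nonempty →
      ConcaveOn ℝ {t : ℝ | 0 < volume {a : Fin n → ℝ | (t, a) ∈ 𝒜}}
        (fun t : ℝ => Real.log (volume {a : Fin n → ℝ | (t, a) ∈ 𝒜}).toReal) := by
  intro 𝒜 hcomp hconv hint
  have hclosed : IsClosed 𝒜 := hcomp.isClosed
  have hne : 𝒜.Nonempty := Set.Nonempty.mono interior_subset hint
  obtain ⟨R₀, hR₀⟩ := hcomp.isBounded.subset_closedBall (0 : ℝ × (Fin n → ℝ))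
  set R : ℝ := max R₀ 0 with hRdef
  have hR : 𝒜 ⊆ closedBall 0 R := hR₀.trans (closedBall_subset_closedBall (le_max_left _ _))
  have hR0 : (0:ℝ) ≤ R := le_max_right _ _
  set d : ℝ × (Fin n → ℝ) → ℝ := fun p => infDist p 𝒜 with hd_def
  -- basic facts about d
  have hd0 : ∀ p, 0 ≤ d p := fun p => infDist_nonneg
  have hdzero : ∀ p ∈ 𝒜, d p = 0 := fun p hp => infDist_zero_of_mem hp
  have hdpos : ∀ p, p ∉ 𝒜 → 0 < d p := by
    intro p hp
    rcases (hd0 p).lt_or_eq with h | h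
    · exact h
    · exact absurd (((hclosed.mem_iff_infDist_zero hne).2 h.symm)) hp
  have hnormA : ∀ q ∈ 𝒜, ‖q.2‖ ≤ R := by
    intro q hq
    have := hR hq
    rw [mem_closedBall, dist_zero_right] at this
    exact (norm_snd_le q).trans this
  have hdlow : ∀ t : ℝ, ∀ x : Fin n → ℝ, ‖x‖ - R ≤ d (t, x) := by
    intro t x
    by_contra hcon
    push_neg at hcon
    obtain ⟨q, hq, hdist⟩ := (infDist_lt_iff hne).1 hcon
    have h1 : ‖x - q.2‖ ≤ dist (t, x) q := by
      rw [Prod.dist_eq]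
      simpa [dist_eq_norm] using le_max_right (dist t q.1) (dist x q.2)
    have h2 : ‖x‖ - ‖q.2‖ ≤ ‖x - q.2‖ := norm_sub_norm_le _ _
    have := hnormA q hq
    linarith
  -- the slices
  set σ : ℝ → Set (Fin n → ℝ) := fun t => {a : Fin n → ℝ | (t, a) ∈ 𝒜} with hσ
  have hσ_closed : ∀ t, IsClosed (σ t) := fun t =>
    hclosed.preimage (Continuous.prodMk_right t)
  have hσ_meas : ∀ t, MeasurableSet (σ t) := fun t => (hσ_closed t).measurableSet
  have hσ_fin : ∀ t, volume (σ t) < ⊤ := by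
    intro t
    have hsub : σ t ⊆ closedBall 0 R := by
      intro a ha
      rw [mem_closedBall, dist_zero_right]
      exact hnormA (t, a) ha
    exact (measure_mono hsub).trans_lt measure_closedBall_lt_top
  -- the approximating convex functions
  set φ : ℕ → ℝ × (Fin n → ℝ) → ℝ := fun k p => ((k : ℝ) + 1) * d p with hφ_def
  have hφconv : ∀ k, ConvexOn ℝ Set.univ (φ k) := by
    intro k
    have := (convexOn_infDist' hne hconv).smul (by positivity : (0:ℝ) ≤ (k:ℝ) + 1)
    simpa [hφ_def, smul_eq_mul] using this
  have hcont_int : ∀ (c : ℝ) (t : ℝ),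
      Continuous fun x : Fin n → ℝ => Real.exp (-(c * d (t, x))) := by
    intro c t
    exact Real.continuous_exp.comp
      ((continuous_const.mul ((continuous_infDist_pt 𝒜).comp (Continuous.prodMk_right t))).neg)
  have hφint : ∀ k t, Integrable (fun x : Fin n → ℝ => Real.exp (-φ k (t, x))) := by
    intro k t
    set c : ℝ := ((k : ℝ) + 1) / n with hc_def
    have hg : Integrable (fun x : Fin n → ℝ =>
        Real.exp (((k:ℝ)+1) * R) * ∏ i, Real.exp (-(c * |x i|))) := by
      refine Integrable.const_mul ?_ _
      exact Integrable.fintype_prod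
        (f := fun _ : Fin n => fun x : ℝ => Real.exp (-(c * |x|)))
        (fun i => integrable_exp_neg_abs' (div_pos (by positivity) (Nat.cast_pos.2 i.pos)))
    refine hg.mono' ((hcont_int _ t).aestronglyMeasurable) (ae_of_all _ fun x => ?_)
    rw [Real.norm_eq_abs, abs_of_pos (Real.exp_pos _)]
    have hprod : ∏ i, Real.exp (-(c * |x i|)) = Real.exp (∑ i, -(c * |x i|)) :=
      (Real.exp_sum _ _).symm
    rw [hprod, ← Real.exp_add, Real.exp_le_exp]
    have hsum_le : c * ∑ i, |x i| ≤ ((k:ℝ)+1) * ‖x‖ := by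
      rcases Nat.eq_zero_or_pos n with hn | hn
      · subst hn
        simp [Finset.univ_eq_empty]
        positivity
      · have h1 : ∑ i, |x i| ≤ (n : ℝ) * ‖x‖ := by
          calc ∑ i, |x i| ≤ ∑ _i : Fin n, ‖x‖ :=
                Finset.sum_le_sum fun i _ => by
                  simpa [Real.norm_eq_abs] using norm_le_pi_norm x i
          _ = (n : ℝ) * ‖x‖ := by simp [Finset.sum_const, mul_comm]
        have hc0 : 0 ≤ c := by positivity
        calc c * ∑ i, |x i| ≤ c * ((n:ℝ) * ‖x‖) := mul_le_mul_of_nonneg_left h1 hc0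
        _ = ((k:ℝ)+1) * ‖x‖ := by
            rw [hc_def]; field_simp
      -- done
    have hd' := hdlow t x
    have hsum_neg : ∑ i, -(c * |x i|) = -(c * ∑ i, |x i|) := by
      rw [Finset.mul_sum]; simp
    rw [hsum_neg]
    have : ((k:ℝ)+1) * (‖x‖ - R) ≤ ((k:ℝ)+1) * d (t, x) :=
      mul_le_mul_of_nonneg_left hd' (by positivity)
    simp only [hφ_def]
    nlinarith
  -- convergence of integrals to the volume of the slice
  have hI_tendsto : ∀ t, Tendsto (fun k : ℕ => ∫ x : Fin n → ℝ, Real.exp (-φ k (t, x)))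
      atTop (𝓝 ((volume (σ t)).toReal)) := by
    intro t
    have key : Tendsto (fun k : ℕ => ∫ x : Fin n → ℝ, Real.exp (-φ k (t, x)))
        atTop (𝓝 (∫ x : Fin n → ℝ, (σ t).indicator (1 : (Fin n → ℝ) → ℝ) x)) := by
      have hexpd : Continuous fun x : Fin n → ℝ => Real.exp (-d (t, x)) := by
        have := hcont_int 1 t; simpa using this
      refine tendsto_integral_of_dominated_convergence
        (fun x => Real.exp (-d (t, x)))
        (fun k => (hcont_int _ t).aestronglyMeasurable)
        ?_ (fun k => ae_of_all _ fun x => ?_) (ae_of_all _ fun x => ?_)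
      · have := hφint 0 t
        simpa [hφ_def] using this
      · rw [Real.norm_eq_abs, abs_of_pos (Real.exp_pos _), Real.exp_le_exp, neg_le_neg_iff]
        have hk : (1:ℝ) ≤ (k:ℝ) + 1 := by
          have := Nat.cast_nonneg (α := ℝ) k; linarith
        have := mul_le_mul_of_nonneg_right hk (hd0 (t, x))
        simpa [hφ_def] using this
      · by_cases hx : (t, x) ∈ 𝒜
        · have h1 : ∀ k : ℕ, Real.exp (-φ k (t, x)) = 1 := by
            intro k; simp [hφ_def, hdzero _ hx]
          have h2 : (σ t).indicator (1 : (Fin n → ℝ) → ℝ) x = 1 := by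
            simp [Set.indicator_of_mem (show x ∈ σ t from hx)]
          rw [h2]
          simp only [h1]
          exact tendsto_const_nhds
        · have hpos := hdpos _ hx
          have h3 : Tendsto (fun k : ℕ => Real.exp (-(((k:ℝ)+1) * d (t, x)))) atTop (𝓝 0) := by
            have h1 : Tendsto (fun k : ℕ => ((k:ℝ)+1)) atTop atTop :=
              tendsto_atTop_add_const_right _ 1 tendsto_natCast_atTop_atTop
            exact Real.tendsto_exp_atBot.comp
              (tendsto_neg_atTop_atBot.comp (h1.atTop_mul_const hpos))
          have h4 : (σ t).indicator (1 : (Fin n → ℝ) → ℝ) x = 0 :=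
            Set.indicator_of_notMem (show x ∉ σ t from hx) _
          rw [h4]
          exact h3
    rwa [integral_indicator_one (hσ_meas t)] at key
  -- convexity of the domain
  have hS : Convex ℝ {t : ℝ | 0 < volume (σ t)} := by
    intro a ha b hb la mu hla hmu hab
    simp only [Set.mem_setOf_eq] at ha hb ⊢
    rcases hla.eq_or_lt with h0 | hla'
    · subst h0; simp only [zero_add] at hab; subst hab; simpa using hb
    rcases hmu.eq_or_lt with h0 | hmu'
    · subst h0; simp only [add_zero] at hab; subst hab; simpa using ha
    obtain ⟨x₀, hx₀⟩ : (σ b).Nonempty := nonempty_of_measure_ne_zero hb.ne'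
    have himg : (fun y : Fin n → ℝ => mu • x₀ + la • y) '' (σ a) ⊆ σ (la • a + mu • b) := by
      rintro _ ⟨w, hw, rfl⟩
      have := hconv hw hx₀ hla hmu hab
      simp only [Prod.smul_mk, Prod.mk_add_mk, smul_eq_mul] at this
      simpa [σ, add_comm] using this
    have heq : (fun y : Fin n → ℝ => mu • x₀ + la • y) '' (σ a)
        = (mu • x₀) +ᵥ (la • σ a) := by
      rw [← Set.image_smul (a := la), ← Set.image_vadd, ← Set.image_comp]
      rfl
    have hval : volume ((fun y : Fin n → ℝ => mu • x₀ + la • y) '' (σ a))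
        = ENNReal.ofReal |la ^ Module.finrank ℝ (Fin n → ℝ)| * volume (σ a) := by
      rw [heq, measure_vadd, Measure.addHaar_smul]
    have hpos : 0 < ENNReal.ofReal |la ^ Module.finrank ℝ (Fin n → ℝ)| * volume (σ a) := by
      apply ENNReal.mul_pos _ ha.ne'
      simp only [ne_eq, ENNReal.ofReal_eq_zero, not_le]
      positivity
    calc (0:ℝ≥0∞) < _ := hpos
    _ = _ := hval.symm
    _ ≤ volume (σ (la • a + mu • b)) := measure_mono himg
  refine ⟨hS, fun a ha b hb la mu hla hmu hab => ?_⟩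
  simp only [Set.mem_setOf_eq] at ha hb
  have hz : 0 < volume (σ (la • a + mu • b)) := hS ha hb hla hmu hab
  have hva : 0 < (volume (σ a)).toReal := ENNReal.toReal_pos ha.ne' (hσ_fin a).ne
  have hvb : 0 < (volume (σ b)).toReal := ENNReal.toReal_pos hb.ne' (hσ_fin b).ne
  have hvz : 0 < (volume (σ (la • a + mu • b))).toReal :=
    ENNReal.toReal_pos hz.ne' (hσ_fin _).ne
  have hlog : ∀ (t : ℝ), 0 < (volume (σ t)).toReal →
      Tendsto (fun k : ℕ => Real.log (∫ x : Fin n → ℝ, Real.exp (-φ k (t, x)))) atTop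
        (𝓝 (Real.log ((volume (σ t)).toReal))) := by
    intro t ht
    exact ((Real.continuousAt_log ht.ne').tendsto).comp (hI_tendsto t)
  have hineq : ∀ k : ℕ,
      la * Real.log (∫ x : Fin n → ℝ, Real.exp (-φ k (a, x)))
        + mu * Real.log (∫ x : Fin n → ℝ, Real.exp (-φ k (b, x)))
      ≤ Real.log (∫ x : Fin n → ℝ, Real.exp (-φ k (la • a + mu • b, x))) := by
    intro k
    have h := (prekopa (φ k) (hφconv k) (hφint k)).2 (Set.mem_univ a) (Set.mem_univ b)
      hla hmu hab
    simp only [smul_eq_mul] at h ⊢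
    linarith [h]
  refine le_of_tendsto_of_tendsto'
    (((hlog a hva).const_mul la).add ((hlog b hvb).const_mul mu))
    (hlog _ hvz) hineq
end

section
/- (Proposition 4.1) Let u : B → ℝ be measurable with u < 0 on the unit ball B ⊆ ℂⁿ, let 0 < p < 2, and let h be a square-integrable function on B. Define ‖h‖²_s := ∫_B |h|² e^{−2 max(u+s,0)} for s ≥ 0. Then ∫_B |h|² e^{−pu} = a_p ∫₀^∞ e^{ps} ‖h‖²_s ds + b_p ‖h‖²₀, where a_p = (1/p + 1/(2−p))^{−1} and b_p = (1/p)·a_p, in the sense that both sides are simultaneously finite or infinite and equal. -/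
open MeasureTheory ENNReal

lemma key_integral {p : ℝ} (hp0 : 0 < p) (hp2 : p < 2) {v : ℝ} (hv : 0 ≤ v) :
    ∫⁻ s in Set.Ioi (0:ℝ), ENNReal.ofReal (Real.exp (p*s)) *
      ENNReal.ofReal (Real.exp (-2 * max (s - v) 0))
    = ENNReal.ofReal ((Real.exp (p*v) - 1)/p + Real.exp (p*v) / (2-p)) := by
  have h2p : 0 < 2 - p := by linarith
  have hsplit : Set.Ioc 0 v ∪ Set.Ioi v = Set.Ioi (0:ℝ) := Set.Ioc_union_Ioi_eq_Ioi hv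
  rw [← hsplit, lintegral_union measurableSet_Ioi (Set.Ioc_disjoint_Ioi le_rfl)]
  have h1 : ∫⁻ s in Set.Ioc 0 v, ENNReal.ofReal (Real.exp (p*s)) *
      ENNReal.ofReal (Real.exp (-2 * max (s - v) 0))
      = ENNReal.ofReal ((Real.exp (p*v) - 1)/p) := by
    rw [setLIntegral_congr_fun measurableSet_Ioc (
      (fun s hs => show ENNReal.ofReal (Real.exp (p*s)) * ENNReal.ofReal
          (Real.exp (-2 * max (s - v) 0)) = ENNReal.ofReal (Real.exp (p*s)) by
        rw [max_eq_right (sub_nonpos.mpr hs.2), mul_zero,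
          Real.exp_zero, ENNReal.ofReal_one, mul_one]))]
    have hint : IntegrableOn (fun s : ℝ => Real.exp (p*s)) (Set.Ioc 0 v) volume :=
      Continuous.integrableOn_Ioc (by fun_prop)
    rw [← ofReal_integral_eq_lintegral_ofReal hint
      (ae_of_all _ fun s => (Real.exp_pos _).le)]
    congr 1
    rw [← intervalIntegral.integral_of_le hv]
    have := intervalIntegral.integral_comp_mul_left (a := (0:ℝ)) (b := v)
      (fun x => Real.exp x) hp0.ne'
    simp only [mul_zero, smul_eq_mul, integral_exp, Real.exp_zero] at this
    rw [this]
    field_simp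
  have h2 : ∫⁻ s in Set.Ioi v, ENNReal.ofReal (Real.exp (p*s)) *
      ENNReal.ofReal (Real.exp (-2 * max (s - v) 0))
      = ENNReal.ofReal (Real.exp (p*v) / (2-p)) := by
    rw [setLIntegral_congr_fun measurableSet_Ioi (
      (fun s hs => show ENNReal.ofReal (Real.exp (p*s)) * ENNReal.ofReal
          (Real.exp (-2 * max (s - v) 0))
          = ENNReal.ofReal (Real.exp (2*v) * Real.exp (-((2-p) * s))) by
        rw [max_eq_left (by linarith [Set.mem_Ioi.mp hs] : (0:ℝ) ≤ s - v),
          ← ENNReal.ofReal_mul (Real.exp_pos _).le, ← Real.exp_add, ← Real.exp_add]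
        ring_nf))]
    have hint2 : IntegrableOn (fun x : ℝ => Real.exp (2*v) * Real.exp (-((2-p) * x)))
        (Set.Ioi v) volume := by
      simpa only [neg_mul, IntegrableOn] using (exp_neg_integrableOn_Ioi v h2p).const_mul (Real.exp (2*v))
    rw [← ofReal_integral_eq_lintegral_ofReal hint2
      (ae_of_all _ fun s => mul_nonneg (Real.exp_pos _).le (Real.exp_pos _).le)]
    rw [MeasureTheory.integral_const_mul]
    have hI : ∫ x in Set.Ioi v, Real.exp (-((2-p) * x)) = (2-p)⁻¹ * Real.exp (-((2-p) * v)) := by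
      have := integral_comp_mul_left_Ioi (fun y => Real.exp (-y)) v h2p
      rw [integral_exp_neg_Ioi] at this
      simpa [smul_eq_mul] using this
    rw [hI, mul_comm ((2-p)⁻¹), ← mul_assoc, ← Real.exp_add,
      show 2*v + -((2-p)*v) = p*v by ring, div_eq_mul_inv]
  have h1e : (1:ℝ) ≤ Real.exp (p*v) := Real.one_le_exp (by positivity)
  rw [h1, h2, ← ENNReal.ofReal_add (div_nonneg (by linarith) hp0.le) (by positivity)]

/-- Proposition 4.1: the weighted norm identity, in `ℝ≥0∞` so that both sides are
simultaneously finite or infinite and equal. -/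
theorem norm_decomposition (n : ℕ)
    (B : Set (Fin n → ℂ)) (hB : B = {z : Fin n → ℂ | ∑ i, ‖z i‖ ^ 2 < 1})
    (u : (Fin n → ℂ) → ℝ) (hu : Measurable u) (huneg : ∀ z ∈ B, u z < 0)
    (p : ℝ) (hp0 : 0 < p) (hp2 : p < 2)
    (h : (Fin n → ℂ) → ℂ) (hh : MemLp h 2 (volume.restrict B))
    (N : ℝ → ℝ≥0∞)
    (hN : ∀ s : ℝ, N s = ∫⁻ z in B, (‖h z‖₊ : ℝ≥0∞) ^ 2
        * ENNReal.ofReal (Real.exp (-2 * max (u z + s) 0)))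
    (a_p b_p : ℝ) (ha : a_p = (1 / p + 1 / (2 - p))⁻¹) (hb : b_p = a_p / p) :
    (∫⁻ z in B, (‖h z‖₊ : ℝ≥0∞) ^ 2 * ENNReal.ofReal (Real.exp (-p * u z)))
      = ENNReal.ofReal a_p
          * (∫⁻ s in Set.Ioi (0:ℝ), ENNReal.ofReal (Real.exp (p * s)) * N s)
        + ENNReal.ofReal b_p * N 0 := by
  have h2p : 0 < 2 - p := by linarith
  have ha_pos : 0 < a_p := by
    rw [ha]; positivity
  have hb_pos : 0 < b_p := by rw [hb]; positivity
  -- measurable version of the squared norm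
  have hgae0 : AEMeasurable (fun z => ((‖h z‖₊ : ℝ≥0∞))^2) (volume.restrict B) :=
    (MeasureTheory.AEStronglyMeasurable.enorm hh.aestronglyMeasurable).pow_const 2
  set g : (Fin n → ℂ) → ℝ≥0∞ := hgae0.mk _ with hgdef
  have hg : Measurable g := hgae0.measurable_mk
  have hge : (fun z => ((‖h z‖₊ : ℝ≥0∞))^2) =ᵐ[volume.restrict B] g := hgae0.ae_eq_mk
  have hBm : MeasurableSet B := by
    rw [hB]
    exact (isOpen_lt (continuous_finset_sum _ fun i _ =>
      (continuous_norm.comp (continuous_apply i)).pow 2) continuous_const).measurableSet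
  have hune : ∀ᵐ z ∂(volume.restrict B), u z < 0 :=
    (ae_restrict_mem hBm).mono fun z hz => huneg z hz
  -- the C function
  set C : (Fin n → ℂ) → ℝ :=
    fun z => (Real.exp (p * -u z) - 1)/p + Real.exp (p * -u z) / (2-p) with hCdef
  have hCm : Measurable C := by
    apply Measurable.add
    · exact (((hu.neg.const_mul p).exp).sub measurable_const).div_const p
    · exact ((hu.neg.const_mul p).exp).div_const (2-p)
  have hC_nonneg : ∀ z, u z < 0 → 0 ≤ C z := by
    intro z hz
    have h1 : (1:ℝ) ≤ Real.exp (p * -u z) :=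
      Real.one_le_exp (by nlinarith)
    have h2 := (Real.exp_pos (p * -u z)).le
    have := div_nonneg (by linarith : (0:ℝ) ≤ Real.exp (p * -u z) - 1) hp0.le
    have := div_nonneg h2 h2p.le
    simp only [hCdef]
    linarith
  -- LHS
  have hL : (∫⁻ z in B, (‖h z‖₊ : ℝ≥0∞) ^ 2 * ENNReal.ofReal (Real.exp (-p * u z)))
      = ∫⁻ z in B, g z * ENNReal.ofReal (Real.exp (-p * u z)) := by
    refine lintegral_congr_ae ?_
    filter_upwards [hge] with z hz
    rw [hz]
  -- N 0
  have hN0 : N 0 = ∫⁻ z in B, g z := by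
    rw [hN 0]
    refine lintegral_congr_ae ?_
    filter_upwards [hge, hune] with z hz1 hz2
    rw [hz1, max_eq_right (by linarith), mul_zero, Real.exp_zero, ENNReal.ofReal_one, mul_one]
  -- N s
  have hNs : ∀ s : ℝ, ENNReal.ofReal (Real.exp (p*s)) * N s
      = ∫⁻ z in B, g z * (ENNReal.ofReal (Real.exp (p*s)) *
          ENNReal.ofReal (Real.exp (-2 * max (u z + s) 0))) := by
    intro s
    rw [hN s, ← lintegral_const_mul' _ _ ofReal_ne_top]
    refine lintegral_congr_ae ?_
    filter_upwards [hge] with z hz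
    rw [hz]; ring
  -- swap
  have hswap : (∫⁻ s in Set.Ioi (0:ℝ), ∫⁻ z in B, g z * (ENNReal.ofReal (Real.exp (p*s)) *
          ENNReal.ofReal (Real.exp (-2 * max (u z + s) 0))))
      = ∫⁻ z in B, ∫⁻ s in Set.Ioi (0:ℝ), g z * (ENNReal.ofReal (Real.exp (p*s)) *
          ENNReal.ofReal (Real.exp (-2 * max (u z + s) 0))) := by
    refine (lintegral_lintegral_swap ?_).symm
    apply Measurable.aemeasurable
    exact (hg.comp measurable_fst).mul
      (((measurable_snd.const_mul p).exp.ennreal_ofReal).mul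
        ((((hu.comp measurable_fst).add measurable_snd).max measurable_const).const_mul
          (-2)).exp.ennreal_ofReal)
  -- inner integral
  have hinner : ∀ᵐ z ∂(volume.restrict B),
      (∫⁻ s in Set.Ioi (0:ℝ), g z * (ENNReal.ofReal (Real.exp (p*s)) *
          ENNReal.ofReal (Real.exp (-2 * max (u z + s) 0))))
      = g z * ENNReal.ofReal (C z) := by
    filter_upwards [hune] with z hz
    rw [lintegral_const_mul]
    · congr 1
      have hmax : ∀ s : ℝ, max (u z + s) 0 = max (s - -u z) 0 := by
        intro s; congr 1; ring
      simp_rw [hmax]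
      exact key_integral hp0 hp2 (by linarith : (0:ℝ) ≤ -u z)
    · exact ((measurable_id.const_mul p).exp.ennreal_ofReal).mul
        ((((measurable_const.add measurable_id).max measurable_const).const_mul
          (-2)).exp.ennreal_ofReal)
  -- assemble
  rw [hL, hN0, lintegral_congr hNs, hswap, lintegral_congr_ae hinner,
    ← lintegral_const_mul' _ _ ofReal_ne_top, ← lintegral_const_mul' _ _ ofReal_ne_top,
    ← lintegral_add_left (f := fun a => ENNReal.ofReal a_p * (g a * ENNReal.ofReal (C a))) (measurable_const.mul (hg.mul hCm.ennreal_ofReal))]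
  refine lintegral_congr_ae ?_
  filter_upwards [hune] with z hz
  have hCnn := hC_nonneg z hz
  rw [← mul_assoc, mul_comm (ENNReal.ofReal a_p) (g z), mul_assoc,
    ← ENNReal.ofReal_mul ha_pos.le, mul_comm (ENNReal.ofReal b_p) (g z),
    ← mul_add, ← ENNReal.ofReal_add (by positivity) hb_pos.le]
  congr 2
  have hE : Real.exp (-p * u z) = Real.exp (p * -u z) := by ring_nf
  rw [hE, hCdef, hb, ha]
  field_simp
  ring
end

section
/- Let k : [0,∞) → ℝ be convex and suppose ∫₀^∞ e^{s − k(s)} ds < ∞. Then there exists p > 1 such that ∫₀^∞ e^{ps − k(s)} ds < ∞. (One-dimensional openness.) -/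
open MeasureTheory

/-- One-dimensional openness. -/
theorem one_dimensional_openness (k : ℝ → ℝ)
    (hk : ConvexOn ℝ (Set.Ici 0) k)
    (hint : IntegrableOn (fun s => Real.exp (s - k s)) (Set.Ioi (0:ℝ))) :
    ∃ p : ℝ, 1 < p ∧
      IntegrableOn (fun s => Real.exp (p * s - k s)) (Set.Ioi (0:ℝ)) := by
  have hcont : ContinuousOn k (Set.Ioi 0) := by
    have := hk.continuousOn_interior
    rwa [interior_Ici] at this
  -- Step 1: find s₁ < s₂ (positive) where the slope of k exceeds 1
  have hex : ∃ s₁ s₂ : ℝ, 0 < s₁ ∧ s₁ < s₂ ∧ k s₁ - s₁ < k s₂ - s₂ := by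
    by_contra h
    push_neg at h
    have hconst : IntegrableOn (fun _ : ℝ => Real.exp (1 - k 1)) (Set.Ioi (1:ℝ)) := by
      apply Integrable.mono' (hint.mono_set (Set.Ioi_subset_Ioi zero_le_one))
        aestronglyMeasurable_const
      filter_upwards [ae_restrict_mem measurableSet_Ioi] with s hs
      rw [Real.norm_eq_abs, abs_of_pos (Real.exp_pos _)]
      have h1 := h 1 s one_pos hs
      exact Real.exp_le_exp.2 (by linarith)
    rw [integrableOn_const_iff] at hconst
    rcases hconst with h' | h'
    · simp at h'
    · simp [Real.volume_Ioi] at h'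
  obtain ⟨s₁, s₂, hs₁, h12, hlt⟩ := hex
  have hs₂ : 0 < s₂ := hs₁.trans h12
  set m : ℝ := (k s₂ - k s₁) / (s₂ - s₁) with hm
  have hm1 : 1 < m := by
    rw [hm, lt_div_iff₀ (by linarith)]
    linarith
  set p : ℝ := (1 + m) / 2 with hp
  have hp1 : 1 < p := by rw [hp]; linarith
  have hpm : p < m := by rw [hp]; linarith
  refine ⟨p, hp1, ?_⟩
  set s₃ : ℝ := s₂ + 1 with hs₃
  set M : ℝ := k s₃ - k s₂ with hM
  -- lower bound on (0, s₂]
  have hleft : ∀ s : ℝ, 0 < s → s ≤ s₂ → k s₂ + M * (s - s₂) ≤ k s := by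
    intro s hs hss
    rcases eq_or_lt_of_le hss with rfl | hss
    · simp
    · have hsec := hk.secant_mono (a := s₂) (x := s) (y := s₃)
        (Set.mem_Ici.2 (le_of_lt hs₂)) (Set.mem_Ici.2 (le_of_lt hs))
        (Set.mem_Ici.2 (by simp only [hs₃]; linarith))
        (ne_of_lt hss) (by simp [hs₃]) (by linarith)
      rw [show s₃ - s₂ = 1 by simp [hs₃], div_one] at hsec
      rw [div_le_iff_of_neg (by linarith)] at hsec
      simp only [hM]
      linarith [hsec]
  -- lower bound on [s₂, ∞)
  have hright : ∀ s : ℝ, s₂ ≤ s → k s₁ + m * (s - s₁) ≤ k s := by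
    intro s hss
    have hsec := hk.secant_mono (a := s₁) (x := s₂) (y := s)
      (Set.mem_Ici.2 (le_of_lt hs₁)) (Set.mem_Ici.2 (le_of_lt hs₂))
      (Set.mem_Ici.2 (by linarith)) (by linarith) (by linarith) hss
    rw [← hm, le_div_iff₀ (by linarith)] at hsec
    linarith
  -- measurability
  have hmeas : AEStronglyMeasurable (fun s => Real.exp (p * s - k s))
      (volume.restrict (Set.Ioi (0:ℝ))) := by
    apply ContinuousOn.aestronglyMeasurable _ measurableSet_Ioi
    exact Real.continuous_exp.comp_continuousOn
      (((continuous_const.mul continuous_id).continuousOn).sub hcont)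
  -- split the domain
  have hsplit : Set.Ioc (0:ℝ) s₂ ∪ Set.Ioi s₂ = Set.Ioi (0:ℝ) :=
    Set.Ioc_union_Ioi_eq_Ioi (le_of_lt hs₂)
  rw [IntegrableOn, ← hsplit]
  apply IntegrableOn.union
  · -- on (0, s₂] : bounded by a constant
    have hconst2 : IntegrableOn (fun _ : ℝ => Real.exp (p * s₂ - k s₂ + |M| * s₂))
        (Set.Ioc (0:ℝ) s₂) := integrableOn_const measure_Ioc_lt_top.ne
    apply Integrable.mono' hconst2 (hmeas.mono_set Set.Ioc_subset_Ioi_self)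
    filter_upwards [ae_restrict_mem measurableSet_Ioc] with s hs
    rw [Real.norm_eq_abs, abs_of_pos (Real.exp_pos _)]
    apply Real.exp_le_exp.2
    have h1 := hleft s hs.1 hs.2
    have h2 : -(M * (s - s₂)) ≤ |M| * s₂ := by
      nlinarith [neg_abs_le M, le_abs_self M, abs_nonneg M, hs.1, hs.2]
    nlinarith [hs.2, hp1]
  · -- on (s₂, ∞) : exponential decay
    have hdecay : IntegrableOn
        (fun s => Real.exp (m * s₁ - k s₁) * Real.exp (-((m - p)) * s))
        (Set.Ioi s₂) :=
      (exp_neg_integrableOn_Ioi s₂ (by linarith)).const_mul _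
    apply Integrable.mono' hdecay (hmeas.mono_set (Set.Ioi_subset_Ioi (le_of_lt hs₂)))
    filter_upwards [ae_restrict_mem measurableSet_Ioi] with s hs
    rw [Real.norm_eq_abs, abs_of_pos (Real.exp_pos _), ← Real.exp_add]
    apply Real.exp_le_exp.2
    have h1 := hright s (le_of_lt hs)
    nlinarith
end

section
/- Let (X,μ) be a measure space, λ : X → ℝ bounded measurable, ε > 0, s > 1/ε. For h ∈ L²(μ), let r = 1_{λ ≤ 1+ε}·h. If ∫₀^s e^t (∫_X |h|² e^{−tλ} dμ) dt ≤ M, then ‖r‖²_{L²(μ)} ≤ 2εM. -/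
open MeasureTheory ENNReal

theorem remainder_estimate {X : Type*} [MeasurableSpace X] (μ : Measure X)
    (lam : X → ℝ) (hlam : Measurable lam) (C : ℝ) (hbdd : ∀ x, |lam x| ≤ C)
    (ε s : ℝ) (hε : 0 < ε) (hs : 1 / ε < s)
    (h : X → ℂ) (hh : MemLp h 2 μ)
    (r : X → ℂ) (hr : r = Set.indicator {x | lam x ≤ 1 + ε} h)
    (M : ℝ)
    (hM : (∫⁻ t in Set.Ioc (0:ℝ) s, ENNReal.ofReal (Real.exp t)
        * ∫⁻ x, (‖h x‖₊ : ℝ≥0∞) ^ 2 * ENNReal.ofReal (Real.exp (-t * lam x)) ∂μ)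
      ≤ ENNReal.ofReal M) :
    (∫⁻ x, (‖r x‖₊ : ℝ≥0∞) ^ 2 ∂μ) ≤ ENNReal.ofReal (2 * ε * M) := by
  set S : Set X := {x | lam x ≤ 1 + ε} with hS
  have hSmeas : MeasurableSet S := hlam measurableSet_Iic
  set R : ℝ≥0∞ := ∫⁻ x, (‖r x‖₊ : ℝ≥0∞) ^ 2 ∂μ with hRdef
  -- R is finite
  have hHfin : (∫⁻ x, (‖h x‖₊ : ℝ≥0∞) ^ 2 ∂μ) < ∞ := by
    have := lintegral_rpow_enorm_lt_top_of_eLpNorm_lt_top (f := h) (p := 2)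
      (by norm_num) (by norm_num) hh.2
    simpa [ENNReal.toReal_ofNat, ENNReal.rpow_two, enorm_eq_nnnorm] using this
  have hRfin : R < ∞ := by
    refine lt_of_le_of_lt (lintegral_mono fun x => ?_) hHfin
    have : ‖r x‖ ≤ ‖h x‖ := by
      rw [hr]; exact norm_indicator_le_norm_self h x
    have hnn : (‖r x‖₊ : ℝ≥0∞) ≤ (‖h x‖₊ : ℝ≥0∞) := by
      exact_mod_cast this
    exact pow_le_pow_left' hnn 2
  -- R as an integral over S
  have hRS : R = ∫⁻ x in S, (‖h x‖₊ : ℝ≥0∞) ^ 2 ∂μ := by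
    rw [hRdef, ← lintegral_indicator hSmeas]
    refine lintegral_congr fun x => ?_
    rw [hr]
    by_cases hx : x ∈ S
    · simp [Set.indicator_of_mem hx]
    · simp [Set.indicator_of_notMem hx]
  -- pointwise-in-t estimate
  have key : ∀ t ∈ Set.Ioc (0:ℝ) s,
      ENNReal.ofReal (Real.exp (-(ε * t))) * R
        ≤ ENNReal.ofReal (Real.exp t)
            * ∫⁻ x, (‖h x‖₊ : ℝ≥0∞) ^ 2 * ENNReal.ofReal (Real.exp (-t * lam x)) ∂μ := by
    intro t ht
    have ht0 : 0 < t := ht.1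
    have step : ENNReal.ofReal (Real.exp (-((1 + ε) * t))) * R
        ≤ ∫⁻ x, (‖h x‖₊ : ℝ≥0∞) ^ 2 * ENNReal.ofReal (Real.exp (-t * lam x)) ∂μ := by
      rw [hRS, ← lintegral_const_mul' _ _ ENNReal.ofReal_ne_top]
      refine le_trans (setLIntegral_mono' hSmeas fun x hx => ?_)
        (setLIntegral_le_lintegral _ _)
      rw [mul_comm]
      refine mul_le_mul_right (ENNReal.ofReal_le_ofReal (Real.exp_le_exp.2 ?_)) _
      have : lam x ≤ 1 + ε := hx
      nlinarith
    calc ENNReal.ofReal (Real.exp (-(ε * t))) * R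
        = ENNReal.ofReal (Real.exp t) * (ENNReal.ofReal (Real.exp (-((1 + ε) * t))) * R) := by
          rw [← mul_assoc, ← ENNReal.ofReal_mul (Real.exp_nonneg _), ← Real.exp_add]
          ring_nf
      _ ≤ _ := mul_le_mul_right step _
  -- integrate the estimate over t
  have hInt : (∫⁻ t in Set.Ioc (0:ℝ) s, ENNReal.ofReal (Real.exp (-(ε * t))) * R)
      ≤ ENNReal.ofReal M := by
    refine le_trans (lintegral_mono_ae ?_) hM
    rw [ae_restrict_iff' measurableSet_Ioc]
    exact ae_of_all _ key
  -- compute the t-integral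
  have hI : (∫⁻ t in Set.Ioc (0:ℝ) s, ENNReal.ofReal (Real.exp (-(ε * t))))
      = ENNReal.ofReal ((1 - Real.exp (-(ε * s))) / ε) := by
    have hsnn : (0:ℝ) ≤ s := le_of_lt (lt_trans (by positivity) hs)
    have hint : IntegrableOn (fun t : ℝ => Real.exp (-(ε * t))) (Set.Ioc 0 s) := by
      apply Continuous.integrableOn_Ioc
      continuity
    rw [← ofReal_integral_eq_lintegral_ofReal hint
      (ae_of_all _ fun t => Real.exp_nonneg _)]
    congr 1
    rw [← intervalIntegral.integral_of_le hsnn]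
    have h1 : ∫ t in (0:ℝ)..s, Real.exp (-(ε * t))
        = ε⁻¹ • ∫ x in (ε * 0)..(ε * s), Real.exp (-x) :=
      intervalIntegral.integral_comp_mul_left (a := (0:ℝ)) (b := s)
        (fun x => Real.exp (-x)) (ne_of_gt hε)
    have h2 : ∫ x in (ε * 0)..(ε * s), Real.exp (-x)
        = ∫ x in (-(ε * s))..(-(ε * 0)), Real.exp x :=
      intervalIntegral.integral_comp_neg (fun x => Real.exp x)
    rw [h1, h2]
    simp only [mul_zero, neg_zero, integral_exp, Real.exp_zero, smul_eq_mul]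
    ring
  have hlow : ENNReal.ofReal (1 / (2 * ε)) ≤ ENNReal.ofReal ((1 - Real.exp (-(ε * s))) / ε) := by
    apply ENNReal.ofReal_le_ofReal
    rw [div_le_div_iff₀ (by positivity) hε]
    have hes : Real.exp (-(ε * s)) ≤ Real.exp (-1) := by
      apply Real.exp_le_exp.2
      have : 1 < ε * s := by
        rw [div_lt_iff₀ hε] at hs; linarith [mul_comm s ε]
      linarith
    have he1 : Real.exp (-1) ≤ 1/2 := by
      rw [Real.exp_neg]
      rw [inv_le_comm₀ (Real.exp_pos 1) (by norm_num)]
      have := Real.add_one_le_exp 1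
      linarith
    nlinarith
  -- put everything together
  have hfinal : R * ENNReal.ofReal (1 / (2 * ε)) ≤ ENNReal.ofReal M := by
    calc R * ENNReal.ofReal (1 / (2 * ε))
        ≤ R * ENNReal.ofReal ((1 - Real.exp (-(ε * s))) / ε) := mul_le_mul_right hlow _
      _ = ∫⁻ t in Set.Ioc (0:ℝ) s, ENNReal.ofReal (Real.exp (-(ε * t))) * R := by
          rw [← hI, ← lintegral_const_mul' _ _ hRfin.ne]
          exact lintegral_congr fun t => mul_comm _ _
      _ ≤ ENNReal.ofReal M := hInt
  have h2e : (0:ℝ) < 1 / (2 * ε) := by positivity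
  have : R ≤ ENNReal.ofReal M / ENNReal.ofReal (1 / (2 * ε)) := by
    rw [ENNReal.le_div_iff_mul_le
      (Or.inl (ne_of_gt (ENNReal.ofReal_pos.2 h2e))) (Or.inl ENNReal.ofReal_ne_top)]
    exact hfinal
  refine le_trans this ?_
  rw [← ENNReal.ofReal_div_of_pos h2e]
  apply ENNReal.ofReal_le_ofReal
  rw [one_div, div_inv_eq_mul]
  have : M * (2 * ε) = 2 * ε * M := by ring
  rw [this]
end
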